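/- arXiv:1108.1894 — 7 statements merged into one kernel-verified Lean document; each statement's English description precedes it below -/
import Mathlib

section
/- Let p be a prime, X a finite group, and H a strongly p-embedded subgroup of X (i.e. p divides |H| and p does not divide |H ∩ H^g| for all g ∈ X \ H). If x ∈ H, y ∈ x^X ∩ H, and p divides both |C_H(x)| and |C_H(y)|, then y ∈ x^H (y is conjugate to x by an element of H). -/
open Subgroup

/-- A p-subgroup containing an element of `H` of order `p` is contained in a
strongly p-embedded subgroup `H`. -/
lemma pgroup_le_of_strongly_embedded {X : Type*} [Group X] [Finite X] {p : ℕ}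
    (hp : p.Prime) (H : Subgroup X)
    (hemb : ∀ g : X, g ∉ H →
      ¬ p ∣ Nat.card (H ⊓ Subgroup.map (MulAut.conj g).toMonoidHom H : Subgroup X))
    (Q : Subgroup X) (hQ : IsPGroup p Q) {b : X} (hbQ : b ∈ Q) (hbH : b ∈ H)
    (hb : orderOf b = p) : Q ≤ H := by
  haveI := Fact.mk hp
  by_contra hQH
  -- K is H ∩ Q viewed inside Q; it is a proper subgroup of the p-group Q.
  set K : Subgroup Q := H.subgroupOf Q with hK
  have hKtop : K < ⊤ := lt_top_iff_ne_top.mpr (fun h => hQH (subgroupOf_eq_top.mp h))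
  haveI : Group.IsNilpotent Q := hQ.isNilpotent
  have hnc := normalizerCondition_of_isNilpotent (G := Q)
  obtain ⟨n, hnN, hnK⟩ := SetLike.exists_of_lt (hnc K hKtop)
  have hnH : (n : X) ∉ H := fun h => hnK (mem_subgroupOf.mpr h)
  apply hemb n hnH
  -- the order-p element b lies in H ∩ H^n
  have hbK : (⟨b, hbQ⟩ : Q) ∈ K := mem_subgroupOf.mpr hbH
  have hconj : n⁻¹ * (⟨b, hbQ⟩ : Q) * n ∈ K := by
    refine (Subgroup.mem_normalizer_iff.mp hnN _).mpr ?_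
    have : n * (n⁻¹ * (⟨b, hbQ⟩ : Q) * n) * n⁻¹ = ⟨b, hbQ⟩ := by group
    rwa [this]
  have hmem : b ∈ (H ⊓ Subgroup.map (MulAut.conj (n : X)).toMonoidHom H : Subgroup X) := by
    refine Subgroup.mem_inf.mpr ⟨hbH, ?_⟩
    refine ⟨(n : X)⁻¹ * b * (n : X), ?_, ?_⟩
    · exact mem_subgroupOf.mp hconj
    · simp only [MulEquiv.coe_toMonoidHom, MulAut.conj_apply]
      group
  calc p = orderOf b := hb.symm
    _ = Nat.card (Subgroup.zpowers b) := (Nat.card_zpowers b).symm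
    _ ∣ _ := Subgroup.card_dvd_of_le (zpowers_le.mpr hmem)

theorem stmt_2 {X : Type*} [Group X] [Finite X] {p : ℕ} (hp : p.Prime)
    (H : Subgroup X)
    (hdvd : p ∣ Nat.card H)
    (hemb : ∀ g : X, g ∉ H →
      ¬ p ∣ Nat.card (H ⊓ Subgroup.map (MulAut.conj g).toMonoidHom H : Subgroup X))
    (x y : X) (hx : x ∈ H) (hy : y ∈ H) (hxy : ∃ g : X, g⁻¹ * x * g = y)
    (hcx : p ∣ Nat.card (H ⊓ Subgroup.centralizer {x} : Subgroup X))
    (hcy : p ∣ Nat.card (H ⊓ Subgroup.centralizer {y} : Subgroup X)) :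
    ∃ h ∈ H, h⁻¹ * x * h = y := by
  haveI := Fact.mk hp
  obtain ⟨g, hg⟩ := hxy
  -- Cauchy: a ∈ H ∩ C(x) of order p, b ∈ H ∩ C(y) of order p
  obtain ⟨a₀, ha₀⟩ := exists_prime_orderOf_dvd_card'
    (G := (H ⊓ Subgroup.centralizer {x} : Subgroup X)) p hcx
  obtain ⟨b₀, hb₀⟩ := exists_prime_orderOf_dvd_card'
    (G := (H ⊓ Subgroup.centralizer {y} : Subgroup X)) p hcy
  set a : X := (a₀ : X) with ha_def
  set b : X := (b₀ : X) with hb_def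
  have ha : orderOf a = p := by rw [ha_def, Subgroup.orderOf_coe, ha₀]
  have hb : orderOf b = p := by rw [hb_def, Subgroup.orderOf_coe, hb₀]
  have haH : a ∈ H := (Subgroup.mem_inf.mp a₀.2).1
  have haC : a ∈ Subgroup.centralizer {x} := (Subgroup.mem_inf.mp a₀.2).2
  have hbH : b ∈ H := (Subgroup.mem_inf.mp b₀.2).1
  have hbC : b ∈ Subgroup.centralizer {y} := (Subgroup.mem_inf.mp b₀.2).2
  have hax : x * a = a * x := Subgroup.mem_centralizer_iff.mp haC x rfl
  -- a' = g⁻¹ a g centralizes y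
  set a' : X := g⁻¹ * a * g with ha'_def
  have ha'C : a' ∈ Subgroup.centralizer {y} := by
    refine Subgroup.mem_centralizer_iff.mpr ?_
    rintro z rfl
    rw [← hg, ha'_def]
    calc g⁻¹ * x * g * (g⁻¹ * a * g) = g⁻¹ * (x * a) * g := by group
      _ = g⁻¹ * (a * x) * g := by rw [hax]
      _ = g⁻¹ * a * g * (g⁻¹ * x * g) := by group
  have ha' : orderOf a' = p := by
    have hsc : SemiconjBy g⁻¹ a a' := by
      simp only [SemiconjBy, ha'_def]; group
    rw [← SemiconjBy.orderOf_eq g⁻¹ hsc, ha]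
  -- work inside C = C_X(y)
  set C : Subgroup X := Subgroup.centralizer {y} with hC
  set A : C := ⟨a', ha'C⟩ with hA
  set B : C := ⟨b, hbC⟩ with hB
  have hApg : IsPGroup p (Subgroup.zpowers A) := by
    refine IsPGroup.of_card (n := 1) ?_
    rw [Nat.card_zpowers, pow_one, hA, Subgroup.orderOf_mk, ha']
  have hBpg : IsPGroup p (Subgroup.zpowers B) := by
    refine IsPGroup.of_card (n := 1) ?_
    rw [Nat.card_zpowers, pow_one, hB, Subgroup.orderOf_mk, hb]
  obtain ⟨P, hP⟩ := hApg.exists_le_sylow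
  obtain ⟨Q, hQ⟩ := hBpg.exists_le_sylow
  obtain ⟨c₀, hc₀⟩ := MulAction.exists_smul_eq (M := ↥C) Q P
  have hAP : A ∈ (P : Subgroup C) := hP (Subgroup.mem_zpowers A)
  have hBQ : B ∈ (Q : Subgroup C) := hQ (Subgroup.mem_zpowers B)
  -- A'' := c₀⁻¹ A c₀ ∈ Q
  have hA'' : c₀⁻¹ * A * c₀ ∈ (Q : Subgroup C) := by
    have : A ∈ ((c₀ • Q : Sylow p C) : Subgroup C) := by rw [hc₀]; exact hAP
    rw [Sylow.smul_def, Sylow.pointwise_smul_def,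
      Subgroup.mem_pointwise_smul_iff_inv_smul_mem] at this
    simpa [MulAut.smul_def, mul_assoc] using this
  -- push Q into X
  set Q' : Subgroup X := (Q : Subgroup C).map C.subtype with hQ'
  have hQ'pg : IsPGroup p Q' := Q.isPGroup'.map C.subtype
  have hbQ' : b ∈ Q' := ⟨B, hBQ, rfl⟩
  have hQ'H : Q' ≤ H := pgroup_le_of_strongly_embedded hp H hemb Q' hQ'pg hbQ' hbH hb
  set c : X := (c₀ : X) with hc_def
  have ha''H : c⁻¹ * a' * c ∈ H := by
    apply hQ'H
    exact ⟨c₀⁻¹ * A * c₀, hA'', rfl⟩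
  have hcC : c ∈ C := c₀.2
  have hyc : y * c = c * y := Subgroup.mem_centralizer_iff.mp hcC y rfl
  refine ⟨g * c, ?_, ?_⟩
  · -- g * c ∈ H since a ∈ H ∩ H^(gc)
    by_contra hn
    apply hemb (g * c) hn
    have hmem : a ∈ (H ⊓ Subgroup.map (MulAut.conj (g * c)).toMonoidHom H : Subgroup X) := by
      refine Subgroup.mem_inf.mpr ⟨haH, ?_⟩
      refine ⟨c⁻¹ * a' * c, ha''H, ?_⟩
      simp only [MulEquiv.coe_toMonoidHom, MulAut.conj_apply, ha'_def]
      group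
    calc p = orderOf a := ha.symm
      _ = Nat.card (Subgroup.zpowers a) := (Nat.card_zpowers a).symm
      _ ∣ _ := Subgroup.card_dvd_of_le (zpowers_le.mpr hmem)
  · calc (g * c)⁻¹ * x * (g * c) = c⁻¹ * (g⁻¹ * x * g) * c := by group
      _ = c⁻¹ * y * c := by rw [hg]
      _ = c⁻¹ * (c * y) := by rw [mul_assoc, ← hyc]
      _ = y := by group
end

section
/- Let p be a prime, G a finite group, P a Sylow p-subgroup of G, and let J = J(P) be the Thompson subgroup of P (the subgroup generated by all abelian subgroups of P of maximal order). Assume J is elementary abelian. Then N_G(J) controls G-fusion in J: for any x, y ∈ J with y = x^g for some g ∈ G, there exists n ∈ N_G(J) with y = x^n. -/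
/-- The subgroup `A` is abelian (as a set of elements of `G`). -/
def IsCommSub {G : Type*} [Group G] (A : Subgroup G) : Prop :=
  ∀ x ∈ A, ∀ y ∈ A, x * y = y * x

/-- The Thompson subgroup `J(P)`: the subgroup generated by the abelian subgroups
of `P` of maximal order. -/
def ThompsonSubgroup {G : Type*} [Group G] (P : Subgroup G) : Subgroup G :=
  ⨆ A ∈ {A : Subgroup G | A ≤ P ∧ IsCommSub A ∧
    ∀ B : Subgroup G, B ≤ P → IsCommSub B → Nat.card B ≤ Nat.card A}, A

section Aux

variable {G : Type*} [Group G] [Finite G]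

lemma aux_finite_subgroup : Finite (Subgroup G) :=
  Finite.of_injective (fun H : Subgroup G => (H : Set G)) SetLike.coe_injective

lemma thompson_le {P : Subgroup G} : ThompsonSubgroup P ≤ P := by
  refine iSup_le fun A => iSup_le fun hA => hA.1

lemma thompson_mem_le {P A : Subgroup G}
    (hA : A ≤ P ∧ IsCommSub A ∧
      ∀ B : Subgroup G, B ≤ P → IsCommSub B → Nat.card B ≤ Nat.card A) :
    A ≤ ThompsonSubgroup P :=
  le_iSup₂_of_le A hA le_rfl

/-- Any abelian subgroup of `P` has card at most that of the Thompson subgroup. -/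
lemma thompson_card_max {P : Subgroup G} (B : Subgroup G) (hBP : B ≤ P)
    (hBc : IsCommSub B) : Nat.card B ≤ Nat.card (ThompsonSubgroup P) := by
  have : Finite (Subgroup G) := aux_finite_subgroup
  have hne : Nonempty {A : Subgroup G // A ≤ P ∧ IsCommSub A} :=
    ⟨⟨⊥, bot_le, fun x hx y hy => by
      rw [Subgroup.mem_bot] at hx hy; simp [hx, hy]⟩⟩
  obtain ⟨⟨A₀, hA₀P, hA₀c⟩, hmax⟩ :=
    Finite.exists_max (fun A : {A : Subgroup G // A ≤ P ∧ IsCommSub A} => Nat.card A.1)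
  have hA₀mem : A₀ ≤ ThompsonSubgroup P :=
    thompson_mem_le ⟨hA₀P, hA₀c, fun B hB hBc => hmax ⟨B, hB, hBc⟩⟩
  exact le_trans (hmax ⟨B, hBP, hBc⟩) (Subgroup.card_le_of_le hA₀mem)

/-- Weak closure: if a conjugate of `J(P)` lies in `P` then it equals `J(P)`,
assuming `J(P)` is abelian. -/
lemma thompson_weakly_closed {P : Subgroup G}
    (hJab : IsCommSub (ThompsonSubgroup P)) (a : G)
    (hle : (ThompsonSubgroup P).map (MulAut.conj a).toMonoidHom ≤ P) :
    (ThompsonSubgroup P).map (MulAut.conj a).toMonoidHom = ThompsonSubgroup P := by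
  set W := ThompsonSubgroup P with hW
  set K := W.map (MulAut.conj a).toMonoidHom with hK
  have hcard : Nat.card K = Nat.card W :=
    (Nat.card_congr (W.equivMapOfInjective _ (MulAut.conj a).injective).toEquiv).symm
  have hKc : IsCommSub K := by
    rintro _ ⟨u, hu, rfl⟩ _ ⟨v, hv, rfl⟩
    rw [← map_mul, ← map_mul, hJab u hu v hv]
  have hKW : K ≤ W :=
    thompson_mem_le ⟨hle, hKc, fun B hB hBc =>
      hcard ▸ thompson_card_max (P := P) B hB hBc⟩
  exact Subgroup.eq_of_le_of_card_ge hKW hcard.ge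

lemma map_conj_map_conj (W : Subgroup G) (a b : G) :
    (W.map (MulAut.conj b).toMonoidHom).map (MulAut.conj a).toMonoidHom
      = W.map (MulAut.conj (a * b)).toMonoidHom := by
  rw [Subgroup.map_map]
  congr 1
  ext x
  simp [MulAut.conj, mul_assoc]

end Aux

theorem stmt_3 {G : Type*} [Group G] [Finite G] {p : ℕ} [Fact p.Prime]
    (P : Sylow p G)
    (hJab : IsCommSub (ThompsonSubgroup (P : Subgroup G)))
    (hJexp : ∀ x ∈ ThompsonSubgroup (P : Subgroup G), x ^ p = 1) :
    ∀ x ∈ ThompsonSubgroup (P : Subgroup G), ∀ y ∈ ThompsonSubgroup (P : Subgroup G),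
      (∃ g : G, g⁻¹ * x * g = y) →
        ∃ n ∈ Subgroup.normalizer (ThompsonSubgroup (P : Subgroup G) : Set G), n⁻¹ * x * n = y := by
  have : Finite (Subgroup G) := aux_finite_subgroup
  have hSylFin : Finite (Sylow p G) :=
    Finite.of_injective (fun Q : Sylow p G => (Q : Subgroup G))
      (fun _ _ h => Sylow.ext h)
  intro x hx y hy hconj
  obtain ⟨g, hg⟩ := hconj
  set W := ThompsonSubgroup (P : Subgroup G) with hWdef
  have hWP : W ≤ (P : Subgroup G) := thompson_le
  have hWp : IsPGroup p W := P.2.to_le hWP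
  -- the centralizer of y
  have hWC : W ≤ Subgroup.centralizer ({y} : Set G) := by
    intro w hw
    rw [Subgroup.mem_centralizer_iff]
    rintro z hz
    rw [Set.mem_singleton_iff] at hz
    rw [hz]
    exact hJab y hy w hw
  set C := Subgroup.centralizer ({y} : Set G) with hCdef
  -- the conjugate W' = g⁻¹ W g centralizes y = g⁻¹ x g
  set W' := W.map (MulAut.conj g⁻¹).toMonoidHom with hW'def
  have hW'C : W' ≤ C := by
    rintro _ ⟨w, hw, rfl⟩
    rw [hCdef, Subgroup.mem_centralizer_iff]
    rintro z hz
    rw [Set.mem_singleton_iff] at hz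
    rw [hz]
    have heq : (MulAut.conj g⁻¹).toMonoidHom w = g⁻¹ * w * g := by
      simp [MulAut.conj]
    rw [heq, ← hg]
    have hcomm : x * w = w * x := hJab x hx w hw
    calc (g⁻¹ * x * g) * (g⁻¹ * w * g) = g⁻¹ * (x * w) * g := by group
      _ = g⁻¹ * (w * x) * g := by rw [hcomm]
      _ = (g⁻¹ * w * g) * (g⁻¹ * x * g) := by group
  have hW'p : IsPGroup p W' := hWp.map _
  -- Sylow subgroups of C containing W and W'
  have hWpC : IsPGroup p (W.subgroupOf C) :=
    hWp.of_equiv (Subgroup.subgroupOfEquivOfLe hWC).symm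
  have hW'pC : IsPGroup p (W'.subgroupOf C) :=
    hW'p.of_equiv (Subgroup.subgroupOfEquivOfLe hW'C).symm
  obtain ⟨S, hS⟩ := hWpC.exists_le_sylow
  obtain ⟨T, hT⟩ := hW'pC.exists_le_sylow
  obtain ⟨c, hc⟩ := MulAction.exists_smul_eq (↥C) S T
  -- S mapped back to G
  set S' := (S : Subgroup ↥C).map C.subtype with hS'def
  have hS'p : IsPGroup p S' := S.2.map _
  obtain ⟨Q, hQ⟩ := hS'p.exists_le_sylow
  have hWQ : W ≤ (Q : Subgroup G) := by
    intro w hw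
    refine hQ ⟨⟨w, hWC hw⟩, hS ?_, rfl⟩
    simpa [Subgroup.mem_subgroupOf] using hw
  have hW''Q : W.map (MulAut.conj ((c : G)⁻¹ * g⁻¹)).toMonoidHom ≤ (Q : Subgroup G) := by
    rintro _ ⟨w, hw, rfl⟩
    have hw' : (MulAut.conj g⁻¹).toMonoidHom w ∈ W' := ⟨w, hw, rfl⟩
    have hw'C : (MulAut.conj g⁻¹).toMonoidHom w ∈ C := hW'C hw'
    have hmem : (⟨_, hw'C⟩ : ↥C) ∈ (T : Subgroup ↥C) := by
      apply hT
      simpa [Subgroup.mem_subgroupOf] using hw'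
    rw [← hc] at hmem
    have hmem2 : (c⁻¹ * ⟨_, hw'C⟩ * c : ↥C) ∈ (S : Subgroup ↥C) := by
      have := Sylow.coe_subgroup_smul (g := c) (P := S)
      rw [this] at hmem
      rw [Subgroup.mem_pointwise_smul_iff_inv_smul_mem] at hmem
      simpa [mul_assoc] using hmem
    apply hQ
    refine ⟨_, hmem2, ?_⟩
    simp [MulAut.conj, mul_assoc]
  -- Q = h • P
  obtain ⟨h, hh⟩ := MulAction.exists_smul_eq G P Q
  have hQP : (Q : Subgroup G) = ((P : Subgroup G)).map (MulAut.conj h).toMonoidHom := by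
    rw [← hh, Sylow.coe_subgroup_smul, Subgroup.pointwise_smul_def]
    rfl
  have hmapP : ∀ a : G, W.map (MulAut.conj a).toMonoidHom ≤ (Q : Subgroup G) →
      W.map (MulAut.conj (h⁻¹ * a)).toMonoidHom = W := by
    intro a ha
    apply thompson_weakly_closed hJab
    rw [← map_conj_map_conj]
    intro z hz
    obtain ⟨u, hu, rfl⟩ := hz
    have : u ∈ (P : Subgroup G).map (MulAut.conj h).toMonoidHom := hQP ▸ ha hu
    obtain ⟨v, hv, hvu⟩ := this
    have : (MulAut.conj h⁻¹).toMonoidHom u = v := by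
      rw [← hvu]; simp [MulAut.conj, mul_assoc]
    rw [this]; exact hv
  have h1 : W.map (MulAut.conj (h⁻¹ * 1)).toMonoidHom = W := by
    apply hmapP
    intro z hz
    obtain ⟨u, hu, rfl⟩ := hz
    simpa using hWQ hu
  have h2 : W.map (MulAut.conj (h⁻¹ * ((c : G)⁻¹ * g⁻¹))).toMonoidHom = W :=
    hmapP _ hW''Q
  -- deduce W.map (conj (c⁻¹ g⁻¹)) = W
  have key : W.map (MulAut.conj ((c : G)⁻¹ * g⁻¹)).toMonoidHom = W := by
    have e1 := congrArg (Subgroup.map (MulAut.conj h).toMonoidHom) h1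
    have e2 := congrArg (Subgroup.map (MulAut.conj h).toMonoidHom) h2
    rw [map_conj_map_conj] at e1 e2
    rw [show h * (h⁻¹ * 1) = 1 by group] at e1
    rw [show h * (h⁻¹ * ((c : G)⁻¹ * g⁻¹)) = (c : G)⁻¹ * g⁻¹ by group] at e2
    rw [e2, ← e1]
    congr 1
    ext z
    simp [MulAut.conj]
  -- n' := c⁻¹ g⁻¹ normalizes W; take n = g * c
  have hn' : ((c : G)⁻¹ * g⁻¹) ∈ Subgroup.normalizer (W : Set G) := by
    rw [Subgroup.mem_normalizer_iff]
    intro z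
    constructor
    · intro hz
      have : (MulAut.conj ((c : G)⁻¹ * g⁻¹)).toMonoidHom z ∈ W := key ▸ ⟨z, hz, rfl⟩
      simpa [MulAut.conj, mul_assoc] using this
    · intro hz
      have hz' : (c : G)⁻¹ * g⁻¹ * z * ((c : G)⁻¹ * g⁻¹)⁻¹ ∈
          W.map (MulAut.conj ((c : G)⁻¹ * g⁻¹)).toMonoidHom := by
        rw [key]; simpa [mul_assoc] using hz
      obtain ⟨u, hu, huz⟩ := hz'
      have : u = z := by
        have : (MulAut.conj ((c : G)⁻¹ * g⁻¹)) u =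
            (MulAut.conj ((c : G)⁻¹ * g⁻¹)) z := by
          simpa [MulAut.conj, mul_assoc] using huz
        exact (MulAut.conj ((c : G)⁻¹ * g⁻¹)).injective this
      rwa [this] at hu
  refine ⟨g * (c : G), ?_, ?_⟩
  · have := (Subgroup.normalizer (W : Set G)).inv_mem hn'
    simpa [mul_inv_rev] using this
  · -- (g c)⁻¹ x (g c) = c⁻¹ (g⁻¹ x g) c = c⁻¹ y c = y
    have hcy : y * (c : G) = (c : G) * y :=
      Subgroup.mem_centralizer_iff.1 c.2 y rfl
    rw [mul_inv_rev, show (c : G)⁻¹ * g⁻¹ * x * (g * (c : G))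
        = (c : G)⁻¹ * (g⁻¹ * x * g) * (c : G) by group, hg]
    rw [show (c : G)⁻¹ * y * (c : G) = (c : G)⁻¹ * (y * (c : G)) by group, hcy]
    group
end

section
/- Let D = Q₈ × Q₈ × Q₈ (direct product of three quaternion groups of order 8), let σ be the automorphism of D cyclically permuting the three direct factors, and let R ≤ D be a subgroup of order 2⁷ with Z(D) ≤ R and R invariant under σ. Then Z(D) ≤ Φ(R), the Frattini subgroup of R. -/
/-- `Q₈ × Q₈ × Q₈`, the direct product of three quaternion groups of order 8. -/
abbrev QQQ : Type := QuaternionGroup 2 × QuaternionGroup 2 × QuaternionGroup 2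

/-- The automorphism of `Q₈ × Q₈ × Q₈` cyclically permuting the three direct factors. -/
def cycQ : QQQ ≃* QQQ where
  toFun x := (x.2.2, x.1, x.2.1)
  invFun x := (x.2.1, x.2.2, x.1)
  left_inv _ := rfl
  right_inv _ := rfl
  map_mul' _ _ := rfl

/-- The Frattini subgroup of a subgroup `R` of `G`: the intersection of the
maximal subgroups of `R`. -/
def frattiniOf {G : Type*} [Group G] (R : Subgroup G) : Subgroup G :=
  ⨅ M ∈ {M : Subgroup G | M < R ∧ ∀ K : Subgroup G, M < K → K ≤ R → K = R}, M

namespace Stmt4Aux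

abbrev Qu := QuaternionGroup 2
abbrev rr : Qu := QuaternionGroup.a 2

/-- The subgroup {q | q*q = 1} of Q₈ (its center). -/
def K : Subgroup Qu where
  carrier := {q | q * q = 1}
  one_mem' := by decide
  mul_mem' := by
    have h : ∀ a b : Qu, a*a = 1 → b*b = 1 → (a*b)*(a*b) = 1 := by decide
    intro a b ha hb; exact h a b ha hb
  inv_mem' := by
    have h : ∀ a : Qu, a*a = 1 → a⁻¹*a⁻¹ = 1 := by decide
    intro a ha; exact h a ha

instance : DecidablePred (· ∈ K) := fun q => decidable_of_iff (q * q = 1) Iff.rfl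

instance : K.Normal := by
  constructor
  have h : ∀ n g : Qu, n*n = 1 → (g*n*g⁻¹)*(g*n*g⁻¹) = 1 := by decide
  intro n hn g; exact h n g hn

/-- Pairs (a,b) of Q₈ elements congruent mod the center. -/
def DD : Subgroup (Qu × Qu) where
  carrier := {p | (p.1 * p.2⁻¹) * (p.1 * p.2⁻¹) = 1}
  one_mem' := by decide
  mul_mem' := by
    have h : ∀ a b c d : Qu, (a*b⁻¹)*(a*b⁻¹) = 1 → (c*d⁻¹)*(c*d⁻¹) = 1 →
        ((a*c)*(b*d)⁻¹)*((a*c)*(b*d)⁻¹) = 1 := by decide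
    intro p q hp hq; exact h p.1 p.2 q.1 q.2 hp hq
  inv_mem' := by
    have h : ∀ a b : Qu, (a*b⁻¹)*(a*b⁻¹) = 1 → (a⁻¹*(b⁻¹)⁻¹)*(a⁻¹*(b⁻¹)⁻¹) = 1 := by decide
    intro p hp; exact h p.1 p.2 hp

instance : DecidablePred (· ∈ DD) := fun p =>
  decidable_of_iff ((p.1 * p.2⁻¹) * (p.1 * p.2⁻¹) = 1) Iff.rfl

def T : Subgroup QQQ := K.prod ⊤

def L : Subgroup QQQ := K.prod DD

def Zc3 : Subgroup QQQ := K.prod (K.prod K)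

lemma cardK : Nat.card K = 2 := by
  rw [Nat.card_eq_fintype_card]; decide

lemma cardQu : Nat.card Qu = 8 := by
  rw [Nat.card_eq_fintype_card]; decide

instance : DecidablePred (· ∈ L) := fun p =>
  decidable_of_iff (p.1 ∈ K ∧ p.2 ∈ DD) (Subgroup.mem_prod).symm

instance : DecidablePred (· ∈ Zc3) := fun p =>
  decidable_of_iff (p.1 ∈ K ∧ p.2.1 ∈ K ∧ p.2.2 ∈ K)
    (by simp [Zc3, Subgroup.mem_prod, and_assoc])

lemma cardL : Nat.card L = 32 := by
  rw [Nat.card_eq_fintype_card]; decide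

lemma cardZc3 : Nat.card Zc3 = 8 := by
  rw [Nat.card_eq_fintype_card]; decide

lemma card_quot : Nat.card (Qu ⧸ K) = 4 := by
  have h := Subgroup.card_eq_card_quotient_mul_card_subgroup K
  rw [cardQu, cardK] at h
  omega

/-- The main counting fact: `{x ∈ R | x₁² = 1}` has at least 32 elements. -/
lemma card_inf_T (R : Subgroup QQQ) (hcard : Nat.card R = 2 ^ 7) :
    32 ≤ Nat.card ↥(T ⊓ R) := by
  set φ : QQQ →* Qu ⧸ K := (QuotientGroup.mk' K).comp (MonoidHom.fst Qu (Qu × Qu)) with hφ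
  set f : ↥R →* Qu ⧸ K := φ.comp R.subtype with hf
  have hker : f.ker = T.subgroupOf R := by
    ext x
    simp [hf, hφ, MonoidHom.mem_ker, QuotientGroup.eq_one_iff, Subgroup.mem_subgroupOf, T,
      Subgroup.mem_prod]
  have hcq : Nat.card ↥R = Nat.card (↥R ⧸ f.ker) * Nat.card f.ker :=
    Subgroup.card_eq_card_quotient_mul_card_subgroup f.ker
  have hqle : Nat.card (↥R ⧸ f.ker) ≤ 4 := by
    have e1 : Nat.card (↥R ⧸ f.ker) = Nat.card f.range :=
      Nat.card_congr (QuotientGroup.quotientKerEquivRange f).toEquiv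
    have e2 : Nat.card f.range ≤ Nat.card (Qu ⧸ K) := Subgroup.card_le_card_group _
    rw [e1]; rw [card_quot] at e2; exact e2
  have hkercard : Nat.card f.ker = Nat.card ↥(T ⊓ R) := by
    rw [hker, ← Subgroup.inf_subgroupOf_right]
    exact Nat.card_congr (Subgroup.subgroupOfEquivOfLe inf_le_right).toEquiv
  rw [hcard] at hcq
  rw [hkercard] at hcq
  have := Nat.mul_le_mul_right (Nat.card ↥(T ⊓ R)) hqle
  omega

end Stmt4Aux

namespace Stmt4Aux

/-- squares of elements of `R` -/
def Sqset (R : Subgroup QQQ) : Set QQQ := {y : QQQ | ∃ x ∈ R, y = x * x}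

lemma l1 : ∀ q : Qu, ¬(q*q = 1) → q*q = rr := by decide
lemma l2 : ∀ a b : Qu, a*a = 1 → (a*b)*(a*b) = b*b := by decide
lemma l3 : ∀ a b : Qu, b*b = 1 → (a*b)*(a*b) = a*a := by decide
lemma l4 : ∀ a b : Qu, (b*a)*(b*a) = 1 → (a*b⁻¹)*(a*b⁻¹) = 1 := by decide
lemma l5 : ∀ a b : Qu, a*a = 1 → b*b = 1 → (a*b⁻¹)*(a*b⁻¹) = 1 := by decide
lemma lcen : ∀ a : Qu, (∀ b : Qu, b*a = a*b) → a = 1 ∨ a = rr := by decide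

lemma center_le_S (R : Subgroup QQQ) (hcard : Nat.card R = 2 ^ 7)
    (hinv : ∀ x ∈ R, cycQ x ∈ R) :
    Subgroup.center QQQ ≤ Subgroup.closure (Sqset R) := by
  set S := Subgroup.closure (Sqset R) with hS
  have hSq_mem : ∀ x ∈ R, x * x ∈ S := fun x hx => Subgroup.subset_closure ⟨x, hx, rfl⟩
  have hScyc : ∀ y ∈ S, cycQ y ∈ S := by
    intro y hy
    have hmap : S.map cycQ.toMonoidHom ≤ S := by
      rw [hS, MonoidHom.map_closure]
      apply Subgroup.closure_mono
      rintro _ ⟨_, ⟨x, hx, rfl⟩, rfl⟩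
      exact ⟨cycQ x, hinv x hx, (map_mul cycQ.toMonoidHom x x).symm⟩
    exact hmap ⟨y, hy, rfl⟩
  -- the key fact : (rr,1,1) ∈ S
  have he1 : ((rr, 1, 1) : QQQ) ∈ S := by
    have pat100 : ∀ x : QQQ, x ∈ R → ¬(x.1*x.1 = 1) → x.2.1*x.2.1 = 1 → x.2.2*x.2.2 = 1 →
        ((rr, 1, 1) : QQQ) ∈ S := by
      rintro ⟨a, b, c⟩ hx h1 h2 h3
      have hxx : ((a,b,c) : QQQ) * (a,b,c) = ((rr,1,1) : QQQ) := by
        show ((a*a, b*b, c*c) : QQQ) = ((rr,1,1) : QQQ)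
        rw [l1 a h1, h2, h3]
      rw [← hxx]; exact hSq_mem _ hx
    by_cases hw1 : ∃ x ∈ R, ¬(x.1*x.1 = 1) ∧ x.2.1*x.2.1 = 1 ∧ x.2.2*x.2.2 = 1
    · obtain ⟨x, hx, ha, hb, hc⟩ := hw1
      exact pat100 x hx ha hb hc
    by_cases hw2 : ∃ x ∈ R, x.1*x.1 = 1 ∧ ¬(x.2.1*x.2.1 = 1) ∧ x.2.2*x.2.2 = 1
    · obtain ⟨x, hx, ha, hb, hc⟩ := hw2
      have hx' : ((x.2.1, x.2.2, x.1) : QQQ) ∈ R := hinv _ (hinv _ hx)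
      exact pat100 _ hx' hb hc ha
    by_cases hw3 : ∃ x ∈ R, x.1*x.1 = 1 ∧ x.2.1*x.2.1 = 1 ∧ ¬(x.2.2*x.2.2 = 1)
    · obtain ⟨x, hx, ha, hb, hc⟩ := hw3
      have hx' : ((x.2.2, x.1, x.2.1) : QQQ) ∈ R := hinv _ hx
      exact pat100 _ hx' hc ha hb
    by_cases hw111 : ∃ x ∈ R, ¬(x.1*x.1 = 1) ∧ ¬(x.2.1*x.2.1 = 1) ∧ ¬(x.2.2*x.2.2 = 1)
    · obtain ⟨x, hx, ha, hb, hc⟩ := hw111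
      have hx2 : x * x = ((rr,rr,rr) : QQQ) := by
        obtain ⟨a, b, c⟩ := x
        show ((a*a, b*b, c*c) : QQQ) = ((rr,rr,rr) : QQQ)
        rw [l1 a ha, l1 b hb, l1 c hc]
      by_cases hw011 : ∃ y ∈ R,
          (y.1*y.1 = 1 ∧ ¬(y.2.1*y.2.1 = 1) ∧ ¬(y.2.2*y.2.2 = 1)) ∨
          (¬(y.1*y.1 = 1) ∧ y.2.1*y.2.1 = 1 ∧ ¬(y.2.2*y.2.2 = 1)) ∨
          (¬(y.1*y.1 = 1) ∧ ¬(y.2.1*y.2.1 = 1) ∧ y.2.2*y.2.2 = 1)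
      · have finish011 : ∀ y : QQQ, y ∈ R → y.1*y.1 = 1 → ¬(y.2.1*y.2.1 = 1) →
            ¬(y.2.2*y.2.2 = 1) → ((rr,1,1) : QQQ) ∈ S := by
          rintro ⟨a, b, c⟩ hy h1 h2 h3
          have hy2 : ((a,b,c) : QQQ) * (a,b,c) = ((1,rr,rr) : QQQ) := by
            show ((a*a, b*b, c*c) : QQQ) = ((1,rr,rr) : QQQ)
            rw [h1, l1 b h2, l1 c h3]
          have hkey : ((rr,1,1) : QQQ) = ((rr,rr,rr) : QQQ) * ((1,rr,rr) : QQQ) := by decide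
          rw [hkey, ← hx2, ← hy2]
          exact mul_mem (hSq_mem _ hx) (hSq_mem _ hy)
        obtain ⟨y, hy, hcase⟩ := hw011
        rcases hcase with ⟨h1, h2, h3⟩ | ⟨h1, h2, h3⟩ | ⟨h1, h2, h3⟩
        · exact finish011 y hy h1 h2 h3
        · exact finish011 ((y.2.1, y.2.2, y.1) : QQQ) (hinv _ (hinv _ hy)) h2 h3 h1
        · exact finish011 ((y.2.2, y.1, y.2.1) : QQQ) (hinv _ hy) h3 h1 h2
      · -- every element of R has pattern 000 or 111 : too small
        exfalso
        have hsub : T ⊓ R ≤ Zc3 := by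
          rintro w ⟨hwT, hwR⟩
          have h1 : w.1*w.1 = 1 := (Subgroup.mem_prod.mp hwT).1
          have h2 : w.2.1*w.2.1 = 1 := by
            by_contra h2
            by_cases h3 : w.2.2*w.2.2 = 1
            · exact hw2 ⟨w, hwR, h1, h2, h3⟩
            · exact hw011 ⟨w, hwR, Or.inl ⟨h1, h2, h3⟩⟩
          have h3 : w.2.2*w.2.2 = 1 := by
            by_contra h3
            exact hw3 ⟨w, hwR, h1, h2, h3⟩
          exact Subgroup.mem_prod.mpr ⟨h1, Subgroup.mem_prod.mpr ⟨h2, h3⟩⟩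
        have hle := Subgroup.card_le_of_le hsub
        rw [cardZc3] at hle
        have hbig := card_inf_T R hcard
        omega
    · -- all patterns even : forces L ≤ R, giving an element of odd pattern
      exfalso
      have hsub : T ⊓ R ≤ L := by
        rintro w ⟨hwT, hwR⟩
        have h1 : w.1*w.1 = 1 := (Subgroup.mem_prod.mp hwT).1
        refine Subgroup.mem_prod.mpr ⟨h1, ?_⟩
        show (w.2.1 * w.2.2⁻¹) * (w.2.1 * w.2.2⁻¹) = 1
        by_cases h2 : w.2.1*w.2.1 = 1
        · by_cases h3 : w.2.2*w.2.2 = 1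
          · exact l5 _ _ h2 h3
          · exact absurd ⟨w, hwR, h1, h2, h3⟩ hw3
        · by_cases h3 : w.2.2*w.2.2 = 1
          · exact absurd ⟨w, hwR, h1, h2, h3⟩ hw2
          · -- consider u = w * cycQ w, which has pattern (1,1,?)
            have huR : w * cycQ w ∈ R := mul_mem hwR (hinv _ hwR)
            have hu : w * cycQ w = ((w.1 * w.2.2, w.2.1 * w.1, w.2.2 * w.2.1) : QQQ) := rfl
            rw [hu] at huR
            have hu1 : ¬((w.1*w.2.2)*(w.1*w.2.2) = 1) := by
              rw [l2 _ _ h1]; exact h3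
            have hu2 : ¬((w.2.1*w.1)*(w.2.1*w.1) = 1) := by
              rw [l3 _ _ h1]; exact h2
            have hu3 : (w.2.2*w.2.1)*(w.2.2*w.2.1) = 1 := by
              by_contra hu3
              exact hw111 ⟨_, huR, hu1, hu2, hu3⟩
            exact l4 _ _ hu3
      have heq : T ⊓ R = L := by
        refine Subgroup.eq_of_le_of_card_ge hsub ?_
        rw [cardL]
        exact card_inf_T R hcard
      have haR : ((1, QuaternionGroup.xa 0, QuaternionGroup.xa 0) : QQQ) ∈ R := by
        have hmem : ((1, QuaternionGroup.xa 0, QuaternionGroup.xa 0) : QQQ) ∈ L := by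
          refine Subgroup.mem_prod.mpr ⟨?_, ?_⟩ <;> decide
        rw [← heq] at hmem
        exact hmem.2
      have hbR : ((1, QuaternionGroup.xa 1, QuaternionGroup.xa 1) : QQQ) ∈ R := by
        have hmem : ((1, QuaternionGroup.xa 1, QuaternionGroup.xa 1) : QQQ) ∈ L := by
          refine Subgroup.mem_prod.mpr ⟨?_, ?_⟩ <;> decide
        rw [← heq] at hmem
        exact hmem.2
      have hcR : ((1, QuaternionGroup.xa 1, QuaternionGroup.xa 1) : QQQ) *
          cycQ ((1, QuaternionGroup.xa 0, QuaternionGroup.xa 0) : QQQ) ∈ R :=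
        mul_mem hbR (hinv _ haR)
      refine hw111 ⟨_, hcR, ?_, ?_, ?_⟩ <;> decide
  have he2 : ((1, rr, 1) : QQQ) ∈ S := hScyc _ he1
  have he3 : ((1, 1, rr) : QQQ) ∈ S := hScyc _ he2
  rintro ⟨z1, z2, z3⟩ hz
  have hz' := Subgroup.mem_center_iff.mp hz
  have h1 : z1 = 1 ∨ z1 = rr := lcen z1 (fun b => congrArg Prod.fst (hz' (b, 1, 1)))
  have h2 : z2 = 1 ∨ z2 = rr := lcen z2 (fun b => congrArg (fun w : QQQ => w.2.1) (hz' (1, b, 1)))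
  have h3 : z3 = 1 ∨ z3 = rr := lcen z3 (fun b => congrArg (fun w : QQQ => w.2.2) (hz' (1, 1, b)))
  rcases h1 with rfl | rfl <;> rcases h2 with rfl | rfl <;> rcases h3 with rfl | rfl
  · exact one_mem S
  · exact he3
  · exact he2
  · have h : ((1,rr,rr) : QQQ) = ((1,rr,1) : QQQ) * ((1,1,rr) : QQQ) := by decide
    rw [h]; exact mul_mem he2 he3
  · exact he1
  · have h : ((rr,1,rr) : QQQ) = ((rr,1,1) : QQQ) * ((1,1,rr) : QQQ) := by decide
    rw [h]; exact mul_mem he1 he3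
  · have h : ((rr,rr,1) : QQQ) = ((rr,1,1) : QQQ) * ((1,rr,1) : QQQ) := by decide
    rw [h]; exact mul_mem he1 he2
  · have h : ((rr,rr,rr) : QQQ) = ((rr,1,1) : QQQ) * (((1,rr,1) : QQQ) * ((1,1,rr) : QQQ)) := by
      decide
    rw [h]; exact mul_mem he1 (mul_mem he2 he3)

end Stmt4Aux

namespace Stmt4Aux

open Pointwise

lemma hcm : ∀ a b : Qu, b * (a*a) = (a*a) * b := by decide
lemma lsq : ∀ a : Qu, (a*a)*(a*a) = 1 := by decide

/-- every square of an element of `R` lies in every maximal subgroup of `R`. -/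
lemma sq_mem_max (R M : Subgroup QQQ)
    (hM : M < R ∧ ∀ K : Subgroup QQQ, M < K → K ≤ R → K = R)
    (x : QQQ) (hx : x ∈ R) : x * x ∈ M := by
  by_contra hzM
  set z := x * x with hzdef
  have hzR : z ∈ R := mul_mem hx hx
  have hzc : ∀ g : QQQ, Commute g z := by
    rintro ⟨g1, g2, g3⟩
    obtain ⟨a, b, c⟩ := x
    show ((g1 * (a*a), g2 * (b*b), g3 * (c*c)) : QQQ) = (((a*a) * g1, (b*b) * g2, (c*c) * g3) : QQQ)
    rw [hcm a g1, hcm b g2, hcm c g3]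
  have hzsq : z * z = 1 := by
    obtain ⟨a, b, c⟩ := x
    show (((a*a)*(a*a), (b*b)*(b*b), (c*c)*(c*c)) : QQQ) = ((1, 1, 1) : QQQ)
    rw [lsq a, lsq b, lsq c]
  set C := Subgroup.zpowers z with hC
  haveI : C.Normal := by
    constructor
    intro n hn g
    obtain ⟨k, rfl⟩ := Subgroup.mem_zpowers_iff.mp hn
    have hcom : Commute g (z ^ k) := (hzc g).zpow_right k
    have : g * z ^ k * g⁻¹ = z ^ k := by
      rw [hcom.eq, mul_assoc, mul_inv_cancel, mul_one]
    rw [this]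
    exact Subgroup.zpowers_le.mpr (Subgroup.mem_zpowers z) (Subgroup.mem_zpowers_iff.mpr ⟨k, rfl⟩)
  have hKR : M ⊔ C ≤ R := sup_le hM.1.le (Subgroup.zpowers_le.mpr hzR)
  have hlt : M < M ⊔ C := by
    refine lt_of_le_of_ne le_sup_left (fun h => hzM ?_)
    have : z ∈ M ⊔ C := (le_sup_right : C ≤ M ⊔ C) (Subgroup.mem_zpowers z)
    rw [← h] at this
    exact this
  have heq : M ⊔ C = R := hM.2 _ hlt hKR
  have hxMC : x ∈ (M : Set QQQ) * (C : Set QQQ) := by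
    rw [← Subgroup.mul_normal M C, heq]
    exact hx
  obtain ⟨m, hm, c, hc, hxeq⟩ := hxMC
  obtain ⟨k, hk⟩ := Subgroup.mem_zpowers_iff.mp hc
  have hcomm : Commute (z ^ k) m := ((hzc m).zpow_right k).symm
  have hcontr : (m * z ^ k) * (m * z ^ k) = m * m := by
    rw [Commute.mul_mul_mul_comm hcomm, ← zpow_add, ← two_mul, zpow_mul]
    have hz2 : z ^ (2 : ℤ) = 1 := by
      rw [show (2 : ℤ) = 1 + 1 from rfl, zpow_add, zpow_one, hzsq]
    rw [hz2, one_zpow, mul_one]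
  apply hzM
  have hxeq' : m * c = x := hxeq
  have : z = (m * z ^ k) * (m * z ^ k) := by rw [hk, hxeq', ← hzdef]
  rw [this, hcontr]
  exact mul_mem hm hm

end Stmt4Aux

theorem stmt_4 (R : Subgroup QQQ) (hcard : Nat.card R = 2 ^ 7)
    (hZ : Subgroup.center QQQ ≤ R) (hinv : ∀ x ∈ R, cycQ x ∈ R) :
    Subgroup.center QQQ ≤ frattiniOf R := by
  intro z hz
  rw [frattiniOf]
  refine Subgroup.mem_iInf.mpr fun M => Subgroup.mem_iInf.mpr fun hM => ?_
  have hzS := Stmt4Aux.center_le_S R hcard hinv hz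
  refine (Subgroup.closure_le M).mpr ?_ hzS
  rintro _ ⟨x, hx, rfl⟩
  exact Stmt4Aux.sq_mem_max R M hM x hx
end

section
/- Every elementary abelian subgroup of order 8 of GL(3, 𝔽₃) contains the center of GL(3, 𝔽₃), i.e. contains the scalar matrix −I. -/
set_option maxHeartbeats 1000000

noncomputable section

namespace Stmt7

section Defs

variable {R : Type*} [Ring R]

def qe (s : Bool) : R := if s then -1 else 1

def qq (s : Bool) (x : R) : R := -(1 + qe s * x)

def PP (a b c : R) (t : Bool × Bool × Bool) : R := qq t.1 a * qq t.2.1 b * qq t.2.2 c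

def XX (a b c : R) (v : Bool × Bool × Bool) : R :=
  (cond v.1 a 1) * (cond v.2.1 b 1) * (cond v.2.2 c 1)

def chi (v t : Bool × Bool × Bool) : Bool :=
  xor (xor (v.1 && t.1) (v.2.1 && t.2.1)) (v.2.2 && t.2.2)

end Defs

variable {R : Type*} [CommRing R]

lemma qq_same (h3 : (3 : R) = 0) (s : Bool) (x : R) (hx : x * x = 1) : qq s x * qq s x = qq s x := by
  cases s
  · simp only [qq, qe, Bool.false_eq_true, if_false]
    linear_combination hx + (x + 1) * h3
  · simp only [qq, qe, if_true]
    linear_combination hx + (1 - x) * h3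

lemma qq_ne (s s' : Bool) (x : R) (hss : s ≠ s') (hx : x * x = 1) : qq s x * qq s' x = 0 := by
  cases s <;> cases s' <;> simp only [qq, qe, if_true, Bool.false_eq_true, if_false] <;>
    first
      | exact absurd rfl hss
      | linear_combination -hx

lemma qq_sum (h3 : (3 : R) = 0) (x : R) : qq true x + qq false x = 1 := by
  simp only [qq, qe, if_true, Bool.false_eq_true, if_false]
  linear_combination -h3

lemma x_mul_qq (s : Bool) (x : R) (hx : x * x = 1) : x * qq s x = qe s * qq s x := by
  cases s
  · simp only [qq, qe, Bool.false_eq_true, if_false]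
    linear_combination -hx
  · simp only [qq, qe, if_true]
    linear_combination hx

lemma cond_mul_qq (s u : Bool) (x : R) (hx : x * x = 1) :
    (cond s x 1) * qq u x = qe (s && u) * qq u x := by
  cases s
  · simp [qe]
  · simpa using x_mul_qq u x hx

lemma qe_mul_qe (s s' : Bool) : (qe s : R) * qe s' = qe (xor s s') := by
  cases s <;> cases s' <;> simp [qe]

variable (a b c : R)

lemma PP_idem (h3 : (3 : R) = 0) (ha : a * a = 1) (hb : b * b = 1) (hc : c * c = 1) (t : Bool × Bool × Bool) : PP a b c t * PP a b c t = PP a b c t := by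
  have h : PP a b c t * PP a b c t =
      (qq t.1 a * qq t.1 a) * ((qq t.2.1 b * qq t.2.1 b) * (qq t.2.2 c * qq t.2.2 c)) := by
    simp only [PP]; ring
  rw [h, qq_same h3 _ _ ha, qq_same h3 _ _ hb, qq_same h3 _ _ hc]
  simp only [PP]; ring

lemma PP_orth (ha : a * a = 1) (hb : b * b = 1) (hc : c * c = 1) (t t' : Bool × Bool × Bool) (hne : t ≠ t') : PP a b c t * PP a b c t' = 0 := by
  obtain ⟨t1, t2, t3⟩ := t
  obtain ⟨u1, u2, u3⟩ := t'
  by_cases h1 : t1 = u1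
  · by_cases h2 : t2 = u2
    · have h3' : t3 ≠ u3 := by subst h1; subst h2; simpa using hne
      have h : PP a b c (t1,t2,t3) * PP a b c (u1,u2,u3) =
          (qq t3 c * qq u3 c) * ((qq t1 a * qq u1 a) * (qq t2 b * qq u2 b)) := by
        simp only [PP]; ring
      rw [h, qq_ne _ _ _ h3' hc, zero_mul]
    · have h : PP a b c (t1,t2,t3) * PP a b c (u1,u2,u3) =
          (qq t2 b * qq u2 b) * ((qq t1 a * qq u1 a) * (qq t3 c * qq u3 c)) := by
        simp only [PP]; ring
      rw [h, qq_ne _ _ _ h2 hb, zero_mul]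
  · have h : PP a b c (t1,t2,t3) * PP a b c (u1,u2,u3) =
        (qq t1 a * qq u1 a) * ((qq t2 b * qq u2 b) * (qq t3 c * qq u3 c)) := by
      simp only [PP]; ring
    rw [h, qq_ne _ _ _ h1 ha, zero_mul]

lemma PP_sum (h3 : (3 : R) = 0) : ∑ t : Bool × Bool × Bool, PP a b c t = 1 := by
  have h : ∑ t : Bool × Bool × Bool, PP a b c t =
      (qq true a + qq false a) * ((qq true b + qq false b) * (qq true c + qq false c)) := by
    simp only [Fintype.sum_prod_type, Fintype.sum_bool, PP]
    ring
  rw [h, qq_sum h3, qq_sum h3, qq_sum h3, one_mul, one_mul]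

lemma XX_mul_PP (ha : a * a = 1) (hb : b * b = 1) (hc : c * c = 1) (v t : Bool × Bool × Bool) :
    XX a b c v * PP a b c t = qe (chi v t) * PP a b c t := by
  have h : XX a b c v * PP a b c t =
      (cond v.1 a 1 * qq t.1 a) * ((cond v.2.1 b 1 * qq t.2.1 b) *
        (cond v.2.2 c 1 * qq t.2.2 c)) := by
    simp only [XX, PP]; ring
  rw [h, cond_mul_qq _ _ _ ha, cond_mul_qq _ _ _ hb, cond_mul_qq _ _ _ hc]
  have h2 : qe (v.1 && t.1) * qq t.1 a * (qe (v.2.1 && t.2.1) * qq t.2.1 b *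
      (qe (v.2.2 && t.2.2) * qq t.2.2 c)) =
      (qe (v.1 && t.1) * qe (v.2.1 && t.2.1) * (qe (v.2.2 && t.2.2) : R)) * PP a b c t := by
    simp only [PP]; ring
  rw [h2, qe_mul_qe, qe_mul_qe]
  rfl


lemma XX_eq_sum (h3 : (3 : R) = 0) (ha : a * a = 1) (hb : b * b = 1) (hc : c * c = 1) (v : Bool × Bool × Bool) :
    XX a b c v = ∑ t, qe (chi v t) * PP a b c t := by
  calc XX a b c v = XX a b c v * ∑ t, PP a b c t := by rw [PP_sum a b c h3, mul_one]
  _ = ∑ t, XX a b c v * PP a b c t := by rw [Finset.mul_sum]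
  _ = ∑ t, qe (chi v t) * PP a b c t :=
    Finset.sum_congr rfl fun t _ => XX_mul_PP a b c ha hb hc v t

section Transfer

variable {S : Type*} [Ring S] (f : R →+* S)

lemma f_qe (s : Bool) : f (qe s) = (qe s : S) := by
  cases s <;> simp [qe]

lemma f_cond (x : R) (s : Bool) : f (cond s x 1) = cond s (f x) 1 := by
  cases s <;> simp

lemma f_XX (a b c : R) (v : Bool × Bool × Bool) :
    f (XX a b c v) = (cond v.1 (f a) 1) * (cond v.2.1 (f b) 1) * (cond v.2.2 (f c) 1) := by
  simp [XX, f_cond]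

lemma fPP_idem (h3 : (3 : R) = 0) (a b c : R) (ha : a * a = 1) (hb : b * b = 1)
    (hc : c * c = 1) (t : Bool × Bool × Bool) :
    f (PP a b c t) * f (PP a b c t) = f (PP a b c t) := by
  rw [← map_mul, PP_idem a b c h3 ha hb hc]

lemma fPP_orth (a b c : R) (ha : a * a = 1) (hb : b * b = 1) (hc : c * c = 1)
    (t t' : Bool × Bool × Bool) (hne : t ≠ t') :
    f (PP a b c t) * f (PP a b c t') = 0 := by
  rw [← map_mul, PP_orth a b c ha hb hc t t' hne, map_zero]

lemma fPP_sum (h3 : (3 : R) = 0) (a b c : R) :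
    ∑ t : Bool × Bool × Bool, f (PP a b c t) = 1 := by
  rw [← map_sum, PP_sum a b c h3, map_one]

lemma fXX_eq_sum (h3 : (3 : R) = 0) (a b c : R) (ha : a * a = 1) (hb : b * b = 1)
    (hc : c * c = 1) (v : Bool × Bool × Bool) :
    f (XX a b c v) = ∑ t, (qe (chi v t) : S) * f (PP a b c t) := by
  rw [XX_eq_sum a b c h3 ha hb hc v, map_sum]
  exact Finset.sum_congr rfl fun t _ => by rw [map_mul, f_qe]

end Transfer

end Stmt7

end

noncomputable section

abbrev M3 := Matrix (Fin 3) (Fin 3) (ZMod 3)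

open Stmt7 in
lemma stmt7_core (a b c : M3) (ha : a * a = 1) (hb : b * b = 1) (hc : c * c = 1)
    (hab : a * b = b * a) (hac : a * c = c * a) (hbc : b * c = c * b)
    (hinj : Function.Injective (fun v : Bool × Bool × Bool =>
      (cond v.1 a 1) * (cond v.2.1 b 1) * (cond v.2.2 c 1))) :
    ∃ v : Bool × Bool × Bool,
      (cond v.1 a 1) * (cond v.2.1 b 1) * (cond v.2.2 c 1) = -1 := by
  classical
  letI : CommRing (Subring.closure ({a, b, c} : Set M3)) :=
    Subring.closureCommRingOfComm (by
      intro x hx y hy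
      rcases hx with rfl | rfl | rfl <;> rcases hy with rfl | rfl | rfl <;>
        first | rfl | assumption | (exact hab.symm) | (exact hac.symm) | (exact hbc.symm))
  have hcl : ∀ x ∈ ({a, b, c} : Set M3), x ∈ Subring.closure ({a, b, c} : Set M3) :=
    fun x hx => Subring.subset_closure hx
  have ha' : a ∈ Subring.closure ({a, b, c} : Set M3) := hcl a (by simp)
  have hb' : b ∈ Subring.closure ({a, b, c} : Set M3) := hcl b (by simp)
  have hc' : c ∈ Subring.closure ({a, b, c} : Set M3) := hcl c (by simp)
  set A : Subring.closure ({a, b, c} : Set M3) := ⟨a, ha'⟩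
  set B : Subring.closure ({a, b, c} : Set M3) := ⟨b, hb'⟩
  set C : Subring.closure ({a, b, c} : Set M3) := ⟨c, hc'⟩
  have hA2 : A * A = 1 := Subtype.ext (by with_unfolding_all exact ha)
  have hB2 : B * B = 1 := Subtype.ext (by with_unfolding_all exact hb)
  have hC2 : C * C = 1 := Subtype.ext (by with_unfolding_all exact hc)
  have h3M : (3 : M3) = 0 := by
    have := CharP.cast_eq_zero M3 3
    simpa using this
  have h3 : (3 : ↥(Subring.closure ({a, b, c} : Set M3))) = 0 := Subtype.ext (by
    show ((3 : ↥(Subring.closure ({a, b, c} : Set M3))) : M3) = ((0 : ↥(Subring.closure ({a, b, c} : Set M3))) : M3)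
    with_unfolding_all push_cast
    exact h3M)
  set f : ↥(Subring.closure ({a, b, c} : Set M3)) →+* M3 :=
    SubringClass.subtype (Subring.closure ({a, b, c} : Set M3)) with hf
  have hfA : f A = a := rfl
  have hfB : f B = b := rfl
  have hfC : f C = c := rfl
  set P : Bool × Bool × Bool → M3 := fun t => f (PP A B C t) with hP
  have hPidem : ∀ t, P t * P t = P t := fun t =>
    fPP_idem f h3 A B C hA2 hB2 hC2 t
  have hPorth : ∀ t t', t ≠ t' → P t * P t' = 0 := fun t t' h =>
    fPP_orth f A B C hA2 hB2 hC2 t t' h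
  have hPsum : ∑ t, P t = 1 := fPP_sum f h3 A B C
  have hXval : ∀ v : Bool × Bool × Bool,
      (cond v.1 a 1) * (cond v.2.1 b 1) * (cond v.2.2 c 1) = f (XX A B C v) := fun v => by
    rw [f_XX, hfA, hfB, hfC]
  have hXsum : ∀ v : Bool × Bool × Bool,
      f (XX A B C v) = ∑ t, (qe (chi v t) : M3) * P t := fun v =>
    fXX_eq_sum f h3 A B C hA2 hB2 hC2 v
  -- ranges of the projections are independent, so at most 3 are nonzero
  classical
  set p : Bool × Bool × Bool → Submodule (ZMod 3) (Fin 3 → ZMod 3) :=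
    fun t => LinearMap.range (Matrix.toLin' (P t)) with hp
  have hindep : iSupIndep p := by
    intro i
    rw [Submodule.disjoint_def]
    intro x hxi hxs
    have hker : (⨆ j, ⨆ (_ : j ≠ i), p j) ≤ LinearMap.ker (Matrix.toLin' (P i)) := by
      refine iSup_le fun j => iSup_le fun hj => ?_
      rw [hp, LinearMap.range_le_ker_iff, ← Matrix.toLin'_mul, hPorth i j (Ne.symm hj)]
      exact map_zero _
    have h0 : Matrix.toLin' (P i) x = 0 := hker hxs
    obtain ⟨y, hy⟩ := hxi
    have hfix : Matrix.toLin' (P i) x = x := by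
      rw [← hy, ← Matrix.toLin'_mul_apply, hPidem]
    rw [hfix] at h0
    exact h0
  have hp_ne : ∀ t, P t ≠ 0 → p t ≠ ⊥ := by
    intro t hPt h
    apply hPt
    have h1 : Matrix.toLin' (P t) = 0 := LinearMap.range_eq_bot.mp h
    apply Matrix.toLin'.injective
    rw [h1, map_zero]
  have hcard3 : Fintype.card {t // p t ≠ ⊥} ≤ 3 := by
    have h := hindep.subtype_ne_bot_le_finrank
    simpa using h
  have hTle : Fintype.card {t // P t ≠ 0} ≤ 3 := by
    refine le_trans (Fintype.card_le_of_injective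
      (fun u => (⟨u.1, hp_ne u.1 u.2⟩ : {t // p t ≠ ⊥})) ?_) hcard3
    intro u u' h
    exact Subtype.ext (by simpa using congrArg Subtype.val h)
  -- the character map is injective, hence bijective
  set Φ : Bool × Bool × Bool → ({t // P t ≠ 0} → Bool) := fun v u => chi v u.1 with hΦ
  have hΦinj : Function.Injective Φ := by
    intro v w h
    apply hinj
    show (cond v.1 a 1) * (cond v.2.1 b 1) * (cond v.2.2 c 1) =
      (cond w.1 a 1) * (cond w.2.1 b 1) * (cond w.2.2 c 1)
    rw [hXval v, hXval w, hXsum v, hXsum w]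
    refine Finset.sum_congr rfl fun t _ => ?_
    by_cases hPt : P t = 0
    · rw [hPt, mul_zero, mul_zero]
    · have hchi : chi v t = chi w t := congrFun h ⟨t, hPt⟩
      rw [hchi]
  have h8 : (8:ℕ) ≤ 2 ^ Fintype.card {t // P t ≠ 0} := by
    have h := Fintype.card_le_of_injective Φ hΦinj
    simpa using h
  have hk : Fintype.card {t // P t ≠ 0} = 3 := by
    obtain ⟨k, hk0⟩ : ∃ k, Fintype.card {t // P t ≠ 0} = k := ⟨_, rfl⟩
    rw [hk0] at hTle h8 ⊢
    interval_cases k <;> first | rfl | (norm_num at h8)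
  have hbij : Function.Bijective Φ :=
    (Fintype.bijective_iff_injective_and_card Φ).mpr ⟨hΦinj, by simp [hk]⟩
  obtain ⟨v, hv⟩ := hbij.2 (fun _ => true)
  refine ⟨v, ?_⟩
  rw [hXval v, hXsum v]
  have hterm : ∀ t ∈ Finset.univ, (qe (chi v t) : M3) * P t = -(P t) := by
    intro t _
    by_cases hPt : P t = 0
    · rw [hPt, mul_zero, neg_zero]
    · have hchi : chi v t = true := congrFun hv ⟨t, hPt⟩
      rw [hchi]
      show (-1 : M3) * P t = -(P t)
      rw [neg_one_mul]
  rw [Finset.sum_congr rfl hterm, Finset.sum_neg_distrib, hPsum]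


theorem stmt_7 (A : Subgroup (GL (Fin 3) (ZMod 3))) (hcard : Nat.card A = 8)
    (hexp : ∀ x ∈ A, x ^ 2 = 1) (hab : ∀ x ∈ A, ∀ y ∈ A, x * y = y * x) :
    Subgroup.center (GL (Fin 3) (ZMod 3)) ≤ A ∧
    ∃ u : GL (Fin 3) (ZMod 3), u ∈ A ∧ (↑u : Matrix (Fin 3) (Fin 3) (ZMod 3)) = -1 := by
  classical
  haveI : Finite ↥A := Nat.finite_of_card_ne_zero (by omega)
  haveI : Fintype ↥A := Fintype.ofFinite _
  letI : CommGroup ↥A :=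
    { (inferInstance : Group ↥A) with
      mul_comm := fun x y => Subtype.ext (hab x.1 x.2 y.1 y.2) }
  have hcardA : Fintype.card ↥A = 8 := by
    rw [← Nat.card_eq_fintype_card]; exact hcard
  have hsq : ∀ x : ↥A, x * x = 1 := by
    intro x
    have h := hexp x.1 x.2
    rw [pow_two] at h
    exact Subtype.ext h
  have hinv : ∀ x : ↥A, x⁻¹ = x := fun x => inv_eq_of_mul_eq_one_right (hsq x)
  -- pick three independent elements
  obtain ⟨a, ha1⟩ := Fintype.exists_ne_of_one_lt_card (by omega) (1 : ↥A)
  have hbex : (Finset.univ \ ({1, a} : Finset ↥A)).Nonempty := by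
    rw [← Finset.card_pos, Finset.card_sdiff_of_subset (Finset.subset_univ _)]
    have := Finset.card_insert_le (1 : ↥A) ({a} : Finset ↥A)
    simp only [Finset.card_univ, hcardA, Finset.card_singleton] at *
    omega
  obtain ⟨b, hb⟩ := hbex
  rw [Finset.mem_sdiff, Finset.mem_insert, Finset.mem_singleton] at hb
  push_neg at hb
  obtain ⟨-, hb1, hba⟩ := hb
  have hcex : (Finset.univ \ ({1, a, b, a * b} : Finset ↥A)).Nonempty := by
    rw [← Finset.card_pos, Finset.card_sdiff_of_subset (Finset.subset_univ _)]
    have h4 : ({1, a, b, a * b} : Finset ↥A).card ≤ 4 := by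
      refine le_trans (Finset.card_insert_le _ _) ?_
      have := Finset.card_insert_le a ({b, a*b} : Finset ↥A)
      have := Finset.card_insert_le b ({a*b} : Finset ↥A)
      simp only [Finset.card_singleton] at *
      omega
    simp only [Finset.card_univ, hcardA]
    omega
  obtain ⟨c, hcc⟩ := hcex
  rw [Finset.mem_sdiff, Finset.mem_insert, Finset.mem_insert, Finset.mem_insert,
    Finset.mem_singleton] at hcc
  push_neg at hcc
  obtain ⟨-, hc1, hca, hcb, hcab⟩ := hcc
  -- the word map is injective
  set W : Bool × Bool × Bool → ↥A :=
    fun v => (cond v.1 a 1) * (cond v.2.1 b 1) * (cond v.2.2 c 1) with hW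
  have hsq' : ∀ x y : ↥A, x * (x * y) = y := by
    intro x y
    rw [← mul_assoc, hsq, one_mul]
  have hWmul : ∀ v w : Bool × Bool × Bool,
      W v * W w = W (xor v.1 w.1, xor v.2.1 w.2.1, xor v.2.2 w.2.2) := by
    rintro ⟨v1, v2, v3⟩ ⟨w1, w2, w3⟩
    simp only [hW]
    cases v1 <;> cases v2 <;> cases v3 <;> cases w1 <;> cases w2 <;> cases w3 <;>
      simp [hsq, hsq', mul_comm, mul_assoc, mul_left_comm]
  have hW1 : ∀ v : Bool × Bool × Bool, W v = 1 → v = (false, false, false) := by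
    rintro ⟨v1, v2, v3⟩ h
    simp only [hW] at h
    cases v1 <;> cases v2 <;> cases v3 <;> simp only [cond_true, cond_false,
      one_mul, mul_one] at h
    · rfl
    · exact absurd h hc1
    · exact absurd h hb1
    · exact absurd (mul_left_cancel (h.trans (hsq b).symm)) hcb
    · exact absurd h ha1
    · exact absurd (mul_left_cancel (h.trans (hsq a).symm)) hca
    · exact absurd (mul_left_cancel (h.trans (hsq a).symm)) hba
    · exact absurd (mul_left_cancel (h.trans (hsq (a*b)).symm)) hcab
  have hWinj : Function.Injective W := by
    intro v w h
    have h1 : W v * W w = 1 := by rw [h, hsq]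
    rw [hWmul] at h1
    have h2 := hW1 _ h1
    obtain ⟨v1, v2, v3⟩ := v
    obtain ⟨w1, w2, w3⟩ := w
    have bxor : ∀ x y : Bool, xor x y = false → x = y := by decide
    simp only [Prod.mk.injEq] at h2 ⊢
    exact ⟨bxor _ _ h2.1, bxor _ _ h2.2.1, bxor _ _ h2.2.2⟩
  -- pass to matrices
  have coe2 : ∀ x : ↥A, ((x : GL (Fin 3) (ZMod 3)) : M3) * ((x : GL (Fin 3) (ZMod 3)) : M3)
      = 1 := by
    intro x
    simpa using congrArg (fun y : ↥A => ((y : GL (Fin 3) (ZMod 3)) : M3)) (hsq x)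
  have coemul : ∀ x y : ↥A, ((x : GL (Fin 3) (ZMod 3)) : M3) * ((y : GL (Fin 3) (ZMod 3)) : M3)
      = ((y : GL (Fin 3) (ZMod 3)) : M3) * ((x : GL (Fin 3) (ZMod 3)) : M3) := by
    intro x y
    simpa using congrArg (fun y : ↥A => ((y : GL (Fin 3) (ZMod 3)) : M3)) (mul_comm x y)
  have hWcoe : ∀ v : Bool × Bool × Bool, ((W v : GL (Fin 3) (ZMod 3)) : M3) =
      (cond v.1 ((a : GL (Fin 3) (ZMod 3)) : M3) 1) *
      (cond v.2.1 ((b : GL (Fin 3) (ZMod 3)) : M3) 1) *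
      (cond v.2.2 ((c : GL (Fin 3) (ZMod 3)) : M3) 1) := by
    rintro ⟨v1, v2, v3⟩
    simp only [hW]
    cases v1 <;> cases v2 <;> cases v3 <;> simp
  have hinjM : Function.Injective (fun v : Bool × Bool × Bool =>
      (cond v.1 ((a : GL (Fin 3) (ZMod 3)) : M3) 1) *
      (cond v.2.1 ((b : GL (Fin 3) (ZMod 3)) : M3) 1) *
      (cond v.2.2 ((c : GL (Fin 3) (ZMod 3)) : M3) 1)) := by
    intro v w h
    refine hWinj (Subtype.ext (Units.ext ?_))
    rw [hWcoe, hWcoe]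
    exact h
  obtain ⟨v, hv⟩ := stmt7_core _ _ _ (coe2 a) (coe2 b) (coe2 c)
    (coemul a b) (coemul a c) (coemul b c) hinjM
  have huA : ((W v : GL (Fin 3) (ZMod 3))) ∈ A := (W v).2
  have huval : ((W v : GL (Fin 3) (ZMod 3)) : M3) = -1 := (hWcoe v).trans hv
  refine ⟨?_, (W v : GL (Fin 3) (ZMod 3)), huA, huval⟩
  -- the center consists of ±1
  intro z hz
  have hcomm := Subgroup.mem_center_iff.mp hz
  have htr : ∀ t : Matrix.TransvectionStruct (Fin 3) (ZMod 3),
      Commute t.toMatrix ((z : GL (Fin 3) (ZMod 3)) : M3) := by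
    intro t
    have h := hcomm ⟨t.toMatrix, t.inv.toMatrix, t.mul_inv, t.inv_mul⟩
    have h2 := congrArg (fun g : GL (Fin 3) (ZMod 3) => (g : M3)) h
    exact (by simpa using h2 : t.toMatrix * ((z : GL (Fin 3) (ZMod 3)) : M3) = ((z : GL (Fin 3) (ZMod 3)) : M3) * t.toMatrix)
  obtain ⟨r, hr⟩ := Matrix.mem_range_scalar_of_commute_transvectionStruct htr
  have hr3 := (by decide : ∀ x : ZMod 3, x = 0 ∨ x = 1 ∨ x = 2) r
  rcases hr3 with rfl | rfl | rfl
  · exfalso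
    have h0 : ((z : GL (Fin 3) (ZMod 3)) : M3) = 0 := by rw [← hr, map_zero]
    have h1 := z.inv_mul
    rw [h0] at h1
    simp at h1
  · have h1 : ((z : GL (Fin 3) (ZMod 3)) : M3) = ((1 : GL (Fin 3) (ZMod 3)) : M3) := by
      rw [← hr, map_one, Units.val_one]
    rw [Units.ext h1]
    exact one_mem A
  · have h1 : ((z : GL (Fin 3) (ZMod 3)) : M3) = ((W v : GL (Fin 3) (ZMod 3)) : M3) := by
      rw [← hr, huval]
      have : (2 : ZMod 3) = -1 := by decide
      rw [this, map_neg, map_one]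
    rw [Units.ext h1]
    exact huA
end
end

section
/- The regular wreath product C₃ ≀ C₃ (of order 81) contains a unique elementary abelian subgroup of order 27, namely its base group C₃ × C₃ × C₃. -/
/-- The cyclic group of order 3, written multiplicatively. -/
abbrev C3 : Type := Multiplicative (ZMod 3)

/-- The shift automorphism of the base group `C₃ × C₃ × C₃` (indexed by `ZMod 3`). -/
def shiftEquiv (k : ZMod 3) : (ZMod 3 → C3) ≃* (ZMod 3 → C3) where
  toFun f i := f (i + k)
  invFun f i := f (i - k)
  left_inv f := funext fun i => by simp
  right_inv f := funext fun i => by simp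
  map_mul' f g := rfl

/-- The action of the top group `C₃` on the base group by shifting coordinates. -/
def shiftHom : C3 →* MulAut (ZMod 3 → C3) where
  toFun k := shiftEquiv k.toAdd
  map_one' := by
    ext f i
    simp [shiftEquiv]
  map_mul' a b := by
    ext f i
    simp [shiftEquiv, add_assoc]

/-- The regular wreath product `C₃ ≀ C₃`, of order 81. -/
abbrev WreathC3 : Type := (ZMod 3 → C3) ⋊[shiftHom] C3

lemma const_of_shift (k : ZMod 3) (hk : k ≠ 0) (c : ZMod 3 → C3)
    (h : ∀ i, c (i + k) = c i) : ∀ i, c i = c 0 := by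
  revert h hk; revert c k; decide

lemma shiftHom_apply (k : C3) (f : ZMod 3 → C3) (i : ZMod 3) :
    shiftHom k f i = f (i + k.toAdd) := rfl

instance : Finite WreathC3 :=
  Finite.of_injective (fun x : WreathC3 => (x.left, x.right))
    (fun a b h => SemidirectProduct.ext (congrArg Prod.fst h) (congrArg Prod.snd h))

/-- The centralizer of an element outside the base group has at most 9 elements. -/
lemma centralizer_card_le (x : WreathC3) (hx : x.right ≠ 1) :
    Nat.card (Subgroup.centralizer {x}) ≤ 9 := by
  have hk : (Multiplicative.toAdd x.right) ≠ 0 := by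
    intro h
    exact hx (by simpa using h)
  -- key: any base element of the centralizer has constant left component
  have key : ∀ g : WreathC3, g ∈ Subgroup.centralizer {x} → g.right = 1 →
      ∀ i, g.left i = g.left 0 := by
    intro g hg hgr
    have hc := (Subgroup.mem_centralizer_singleton_iff).mp hg
    have hleft : (g * x).left = (x * g).left := by rw [hc]
    rw [SemidirectProduct.mul_left, SemidirectProduct.mul_left, hgr, map_one] at hleft
    simp only [MulAut.one_apply] at hleft
    -- hleft : g.left * x.left = x.left * shiftHom x.right g.left
    have h2 : shiftHom x.right g.left = g.left := by
      have := mul_left_cancel (a := x.left) (b := shiftHom x.right g.left) (c := g.left)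
      apply this
      rw [← hleft, mul_comm]
    apply const_of_shift _ hk
    intro i
    have := congrFun h2 i
    rwa [shiftHom_apply] at this
  have hinj : Function.Injective
      (fun g : Subgroup.centralizer {x} => ((g : WreathC3).left 0, (g : WreathC3).right)) := by
    rintro ⟨g, hg⟩ ⟨h, hh⟩ heq
    simp only [Prod.mk.injEq] at heq
    obtain ⟨h1, h2⟩ := heq
    have hmem : g * h⁻¹ ∈ Subgroup.centralizer {x} := mul_mem hg (inv_mem hh)
    have hr : (g * h⁻¹).right = 1 := by
      rw [SemidirectProduct.mul_right, SemidirectProduct.inv_right, h2, mul_inv_cancel]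
    have hl : ∀ i, (g * h⁻¹).left i = (g * h⁻¹).left 0 := key _ hmem hr
    have hcompute : (g * h⁻¹).left = g.left * h.left⁻¹ := by
      rw [SemidirectProduct.mul_left, SemidirectProduct.inv_left, h2, ← MulAut.mul_apply,
        ← map_mul, mul_inv_cancel, map_one, MulAut.one_apply]
    have : ∀ i, g.left i * (h.left i)⁻¹ = 1 := by
      intro i
      have := hl i
      rw [hcompute] at this
      simpa [h1] using this
    have hleft : g.left = h.left := by
      funext i
      have := this i
      rwa [mul_inv_eq_one] at this
    ext : 1
    exact SemidirectProduct.ext hleft h2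
  calc Nat.card (Subgroup.centralizer {x})
      ≤ Nat.card (C3 × C3) := Nat.card_le_card_of_injective _ hinj
    _ = 9 := by simp [Nat.card_eq_fintype_card]

theorem stmt_11 :
    (Nat.card ((SemidirectProduct.inl : (ZMod 3 → C3) →* WreathC3).range) = 27 ∧
      (∀ x ∈ (SemidirectProduct.inl : (ZMod 3 → C3) →* WreathC3).range,
        ∀ y ∈ (SemidirectProduct.inl : (ZMod 3 → C3) →* WreathC3).range, x * y = y * x) ∧
      (∀ x ∈ (SemidirectProduct.inl : (ZMod 3 → C3) →* WreathC3).range, x ^ 3 = 1)) ∧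
    ∀ A : Subgroup WreathC3, Nat.card A = 27 →
      (∀ x ∈ A, ∀ y ∈ A, x * y = y * x) → (∀ x ∈ A, x ^ 3 = 1) →
        A = (SemidirectProduct.inl : (ZMod 3 → C3) →* WreathC3).range := by
  have hrangecard : Nat.card
      ((SemidirectProduct.inl : (ZMod 3 → C3) →* WreathC3).range) = 27 := by
    rw [← Nat.card_congr (MonoidHom.ofInjective
      (SemidirectProduct.inl_injective (φ := shiftHom))).toEquiv]
    simp [Nat.card_eq_fintype_card]
  refine ⟨⟨hrangecard, ?_, ?_⟩, ?_⟩
  · rintro x ⟨f, rfl⟩ y ⟨g, rfl⟩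
    rw [← map_mul, ← map_mul, mul_comm]
  · rintro x ⟨f, rfl⟩
    rw [← map_pow, ← map_one (SemidirectProduct.inl (φ := shiftHom))]
    congr 1
    funext i
    show (f i) ^ 3 = 1
    have h3 : ∀ a : C3, a ^ 3 = 1 := by decide
    exact h3 _
  · intro A hcard hcomm _hexp
    have hle : A ≤ (SemidirectProduct.inl : (ZMod 3 → C3) →* WreathC3).range := by
      intro x hx
      by_cases hxr : x.right = 1
      · exact ⟨x.left, SemidirectProduct.ext rfl hxr.symm⟩
      · exfalso
        have hAC : A ≤ Subgroup.centralizer {x} := by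
          intro y hy
          rw [Subgroup.mem_centralizer_singleton_iff]
          exact hcomm y hy x hx
        have hdvd : Nat.card A ∣ Nat.card (Subgroup.centralizer {x}) :=
          Subgroup.card_dvd_of_le hAC
        have hle9 := centralizer_card_le x hxr
        have hpos : 0 < Nat.card (Subgroup.centralizer {x}) := Nat.card_pos
        have := Nat.le_of_dvd hpos (hcard ▸ hdvd)
        omega
    apply SetLike.ext'
    apply Set.eq_of_subset_of_ncard_le hle ?_ (Set.toFinite _)
    rw [← Nat.card_coe_set_eq, ← Nat.card_coe_set_eq]
    exact le_of_le_of_eq hrangecard.le hcard.symm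
end

section
/- Let p be a prime and G a finite group with Sylow p-subgroup P, and suppose J = J(P) (the Thompson subgroup of P) is elementary abelian. If J is not contained in the derived subgroup of N_G(J), then J is not contained in the derived subgroup of G. -/
namespace Stmt17Aux

open MulAction Subgroup Function
open MulAction Subgroup Function

theorem smul_quot_fixed_iff {G : Type*} [Group G] {H : Subgroup G} (u : G) (b : G ⧸ H) :
    u • b = b ↔ b.out⁻¹ * u * b.out ∈ H := by
  conv_lhs => rw [← QuotientGroup.out_eq' b]
  rw [MulAction.Quotient.smul_mk, QuotientGroup.eq,
    show (u • b.out)⁻¹ * b.out = (b.out⁻¹ * u * b.out)⁻¹ by simp [smul_eq_mul]; group,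
    inv_mem_iff]

theorem transfer_eq_of_unique_fixed {G : Type*} [Group G] [Finite G] {p : ℕ} [Fact p.Prime]
    {H J : Subgroup G} {A : Type*} [CommGroup A] (ϕ : ↥H →* A)
    (hJH : J ≤ H)
    (hJcomm : ∀ a ∈ J, ∀ b ∈ J, a * b = b * a)
    (hJp : IsPGroup p ↥J)
    (hconj : ∀ (h w : G) (hh : h ∈ H) (hw : w ∈ H) (hw2 : h⁻¹ * w * h ∈ H),
        ϕ ⟨h⁻¹ * w * h, hw2⟩ = ϕ ⟨w, hw⟩)
    (hwc : ∀ g : G, (∀ u ∈ J, g⁻¹ * u * g ∈ H) → g ∈ H)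
    (x : G) (hx : x ∈ J) (hxp : x ^ p = 1) :
    ϕ.transfer x = ϕ ⟨x, hJH hx⟩ := by
  classical
  letI : Fintype (G ⧸ H) := Fintype.ofFinite _
  have hp : p.Prime := Fact.out
  have hxH : x ∈ H := hJH hx
  have hper : ∀ b : G ⧸ H, minimalPeriod (fun z => x • z) b = 1 ∨
      minimalPeriod (fun z => x • z) b = p := by
    intro b
    have : IsPeriodicPt (fun z => x • z) p b := by
      unfold IsPeriodicPt IsFixedPt
      rw [smul_iterate, hxp]
      exact one_smul G b
    exact (Nat.Prime.eq_one_or_self_of_dvd hp _ (IsPeriodicPt.minimalPeriod_dvd this))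
  have hfix1 : ∀ b : G ⧸ H, x • b = b ↔ minimalPeriod (fun z => x • z) b = 1 := by
    intro b
    rw [Function.minimalPeriod_eq_one_iff_isFixedPt]
    exact Iff.rfl
  set F : (G ⧸ H) → A := fun b =>
    if hb : x • b = b then ϕ ⟨b.out⁻¹ * x * b.out, (smul_quot_fixed_iff x b).mp hb⟩
    else 1 with hF
  -- Step 1: transfer equals the product of F over all cosets
  have htr : ϕ.transfer x = ∏ b : G ⧸ H, F b := by
    rw [MonoidHom.transfer_eq_prod_quotient_orbitRel_zpowers_quot]
    rw [← Finset.prod_filter_of_ne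
      (p := fun q : Quotient (orbitRel (↥(zpowers x)) (G ⧸ H)) => x • q.out = q.out)
      (s := Finset.univ) ?_]
    · rw [← Finset.prod_filter_of_ne (p := fun b : G ⧸ H => x • b = b)
        (s := Finset.univ) ?_]
      · refine Finset.prod_bij (fun q _ => q.out) ?_ ?_ ?_ ?_
        · intro q hq
          simp only [Finset.mem_filter, Finset.mem_univ, true_and] at hq ⊢
          exact hq
        · intro q₁ h₁ q₂ h₂ h
          exact Quotient.out_injective h
        · intro b hb
          simp only [Finset.mem_filter, Finset.mem_univ, true_and] at hb
          have hst : zpowers x ≤ stabilizer G b := zpowers_le.mpr (mem_stabilizer_iff.mpr hb)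
          have hout : (Quotient.mk (orbitRel (↥(zpowers x)) (G ⧸ H)) b).out = b := by
            have hrel := Quotient.mk_out (s := orbitRel (↥(zpowers x)) (G ⧸ H)) b
            rw [orbitRel_apply] at hrel
            obtain ⟨z, hz⟩ := hrel
            rw [← hz]
            exact mem_stabilizer_iff.mp (hst z.2)
          refine ⟨Quotient.mk _ b, ?_, hout⟩
          simp only [Finset.mem_filter, Finset.mem_univ, true_and, hout]
          exact hb
        · intro q hq
          simp only [Finset.mem_filter, Finset.mem_univ, true_and] at hq
          have hmp : minimalPeriod (fun z => x • z) q.out = 1 := (hfix1 _).mp hq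
          have e1 : (⟨(Quotient.out q.out)⁻¹ * x ^ minimalPeriod (fun z => x • z) q.out *
              Quotient.out q.out,
              QuotientGroup.out_conj_pow_minimalPeriod_mem H x q.out⟩ : ↥H) =
              ⟨(Quotient.out q.out)⁻¹ * x * Quotient.out q.out,
                (smul_quot_fixed_iff x q.out).mp hq⟩ := by
            exact Subtype.ext (by simp only [hmp, pow_one])
          rw [e1, hF]
          simp only [dif_pos hq]
      · intro b _ hb
        by_contra hfix
        simp only [hF, dif_neg hfix] at hb
        exact hb rfl
    · intro q _ hq
      by_contra hfix
      have hmp : minimalPeriod (fun z => x • z) q.out = p := by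
        rcases hper q.out with h | h
        · exact absurd ((hfix1 _).mpr h) hfix
        · exact h
      refine hq ?_
      have e1 : (⟨(Quotient.out q.out)⁻¹ * x ^ minimalPeriod (fun z => x • z) q.out *
          Quotient.out q.out, QuotientGroup.out_conj_pow_minimalPeriod_mem H x q.out⟩ : ↥H)
          = 1 := by
        refine Subtype.ext ?_
        simp only [hmp, hxp, OneMemClass.coe_one]
        group
      rw [e1, map_one]
  rw [htr]
  -- basic facts about F
  have hFp : ∀ b : G ⧸ H, F b ^ p = 1 := by
    intro b
    by_cases hb : x • b = b
    · simp only [hF, dif_pos hb]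
      rw [← map_pow]
      have harg : (⟨b.out⁻¹ * x * b.out, (smul_quot_fixed_iff x b).mp hb⟩ : ↥H) ^ p = 1 := by
        refine Subtype.ext ?_
        rw [SubmonoidClass.coe_pow, OneMemClass.coe_one]
        have h1 : (b.out⁻¹ * x * b.out) ^ p = b.out⁻¹ * x ^ p * b.out := by
          rw [show b.out⁻¹ * x * b.out = b.out⁻¹ * x * b.out⁻¹⁻¹ by rw [inv_inv],
            conj_pow, inv_inv]
        rw [h1, hxp]
        group
      rw [harg, map_one]
    · simp only [hF, dif_neg hb, one_pow]
  have hFJ : ∀ (u : G), u ∈ J → ∀ b : G ⧸ H, F ((u : G) • b) = F b := by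
    intro u hu b
    have hxu : x * u = u * x := hJcomm x hx u hu
    have hux : u⁻¹ * x * u = x := by
      calc u⁻¹ * x * u = u⁻¹ * (x * u) := by group
      _ = u⁻¹ * (u * x) := by rw [hxu]
      _ = x := by group
    have hswap : ∀ c : G ⧸ H, x • (u • c) = u • (x • c) := fun c => by
      rw [smul_smul, smul_smul, hxu]
    by_cases hb : x • b = b
    · have hub : x • (u • b) = u • b := by rw [hswap, hb]
      simp only [hF, dif_pos hb, dif_pos hub]
      have hmkc : ((u * b.out : G) : G ⧸ H) = (((u • b).out : G) : G ⧸ H) := by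
        rw [show (u * b.out : G) = u • b.out from rfl, ← MulAction.Quotient.smul_mk,
          QuotientGroup.out_eq', QuotientGroup.out_eq']
      have hh : (u * b.out)⁻¹ * (u • b).out ∈ H := (QuotientGroup.eq).mp hmkc
      have hc : (u • b).out = u * b.out * ((u * b.out)⁻¹ * (u • b).out) := by group
      have hwa : b.out⁻¹ * x * b.out ∈ H := (smul_quot_fixed_iff x b).mp hb
      have harg : (⟨(u • b).out⁻¹ * x * (u • b).out, (smul_quot_fixed_iff x (u • b)).mp hub⟩ : ↥H)
          = ⟨((u * b.out)⁻¹ * (u • b).out)⁻¹ * (b.out⁻¹ * x * b.out) *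
              ((u * b.out)⁻¹ * (u • b).out), by
            exact Subgroup.mul_mem _ (Subgroup.mul_mem _ (inv_mem hh) hwa) hh⟩ := by
        refine Subtype.ext ?_
        show (u • b).out⁻¹ * x * (u • b).out =
          ((u * b.out)⁻¹ * (u • b).out)⁻¹ * (b.out⁻¹ * x * b.out) *
            ((u * b.out)⁻¹ * (u • b).out)
        conv_lhs => rw [hc]
        rw [show (u * b.out * ((u * b.out)⁻¹ * (u • b).out))⁻¹ * x *
            (u * b.out * ((u * b.out)⁻¹ * (u • b).out)) =
            ((u * b.out)⁻¹ * (u • b).out)⁻¹ * (b.out⁻¹ * (u⁻¹ * x * u) * b.out) *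
            ((u * b.out)⁻¹ * (u • b).out) from by group, hux]
      rw [harg]
      exact hconj _ _ hh hwa _
    · have hub : ¬ x • (u • b) = u • b := by
        intro hcon
        rw [hswap] at hcon
        exact hb (smul_left_cancel u hcon)
      simp only [hF, dif_neg hb, dif_neg hub]
  -- the identity coset
  have hb0fix : x • (((1 : G) : G ⧸ H)) = ((1 : G) : G ⧸ H) := by
    rw [MulAction.Quotient.smul_mk]
    refine (QuotientGroup.eq).mpr ?_
    simpa using inv_mem hxH
  have hJfix : ∀ b : G ⧸ H, (∀ u ∈ J, u • b = b) → b = ((1 : G) : G ⧸ H) := by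
    intro b hball
    have hbH : b.out ∈ H := hwc b.out fun u hu => (smul_quot_fixed_iff u b).mp (hball u hu)
    calc b = ((b.out : G) : G ⧸ H) := (QuotientGroup.out_eq' b).symm
    _ = ((1 : G) : G ⧸ H) := (QuotientGroup.eq).mpr (by simpa using inv_mem hbH)
  have hFb0 : F ((1 : G) : G ⧸ H) = ϕ ⟨x, hxH⟩ := by
    simp only [hF, dif_pos hb0fix]
    have he : (((1 : G) : G ⧸ H)).out ∈ H := by
      have : ((((1 : G) : G ⧸ H)).out : G ⧸ H) = ((1 : G) : G ⧸ H) :=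
        QuotientGroup.out_eq' _
      have := (QuotientGroup.eq).mp this
      simpa using inv_mem this
    exact hconj _ _ he hxH _
  -- group the product by J-orbits
  rw [← Finset.prod_fiberwise_of_maps_to
      (t := (Finset.univ : Finset (Quotient (orbitRel (↥J) (G ⧸ H)))))
      (g := fun b : G ⧸ H => (Quotient.mk (orbitRel (↥J) (G ⧸ H)) b))
      (fun b _ => Finset.mem_univ _) F]
  have hsingle : ∀ ω, ω ≠ Quotient.mk (orbitRel (↥J) (G ⧸ H)) ((1 : G) : G ⧸ H) →
      (∏ b ∈ Finset.filter
        (fun b : G ⧸ H => Quotient.mk (orbitRel (↥J) (G ⧸ H)) b = ω) Finset.univ, F b) = 1 := by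
    intro ω hω
    set s := Finset.filter
        (fun b : G ⧸ H => Quotient.mk (orbitRel (↥J) (G ⧸ H)) b = ω) Finset.univ with hs
    rcases s.eq_empty_or_nonempty with hemp | ⟨b₁, hb₁⟩
    · rw [hemp, Finset.prod_empty]
    · have hb₁' : Quotient.mk (orbitRel (↥J) (G ⧸ H)) b₁ = ω := by
        simpa [hs] using hb₁
      have hconst : ∀ b ∈ s, F b = F b₁ := by
        intro b hb
        have hbb : Quotient.mk (orbitRel (↥J) (G ⧸ H)) b =
            Quotient.mk (orbitRel (↥J) (G ⧸ H)) b₁ := by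
          simp only [hs, Finset.mem_filter] at hb
          rw [hb.2, hb₁']
        have hrel : b ∈ orbit (↥J) b₁ := Quotient.exact hbb
        obtain ⟨v, hv⟩ := hrel
        rw [← hv]
        exact hFJ (v : G) v.2 b₁
      rw [Finset.prod_congr rfl hconst, Finset.prod_const]
      -- the cardinality of the fiber is the orbit size, a power of p
      have hsorb : s = (orbit (↥J) b₁).toFinset := by
        ext c
        simp only [hs, Finset.mem_filter, Finset.mem_univ, true_and, Set.mem_toFinset]
        constructor
        · intro hc
          exact (Quotient.exact (hc.trans hb₁'.symm) : c ∈ orbit (↥J) b₁)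
        · intro hc
          rw [← hb₁']
          exact Quotient.sound (hc : c ∈ orbit (↥J) b₁)
      have hcard : s.card = Nat.card (orbit (↥J) b₁) := by
        rw [hsorb, Set.toFinset_card, Nat.card_eq_fintype_card]
      have hdvd : Nat.card (orbit (↥J) b₁) ∣ Nat.card (↥J) := by
        haveI : Fintype (↥J) := Fintype.ofFinite _
        haveI : Fintype (orbit (↥J) b₁) := Fintype.ofFinite _
        haveI : Fintype (stabilizer (↥J) b₁) := Fintype.ofFinite _
        rw [Nat.card_eq_fintype_card, Nat.card_eq_fintype_card]
        exact Dvd.intro _ (MulAction.card_orbit_mul_card_stabilizer_eq_card_group (↥J) b₁)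
      obtain ⟨k, hk⟩ := IsPGroup.iff_card.mp hJp
      rw [hk] at hdvd
      obtain ⟨j, hj, hcardj⟩ := (Nat.dvd_prime_pow hp).mp hdvd
      rcases Nat.eq_zero_or_pos j with hj0 | hjpos
      · -- singleton fiber: impossible since ω is not the identity orbit
        exfalso
        rw [hj0, pow_zero] at hcardj
        have hfix : ∀ u ∈ J, u • b₁ = b₁ := by
          intro u hu
          haveI : Fintype (orbit (↥J) b₁) := Fintype.ofFinite _
          rw [Nat.card_eq_fintype_card] at hcardj
          obtain ⟨a, ha⟩ := Fintype.card_eq_one_iff.mp hcardj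
          have e1 := ha ⟨(⟨u, hu⟩ : ↥J) • b₁, mem_orbit b₁ _⟩
          have e2 := ha ⟨b₁, mem_orbit_self b₁⟩
          exact (congrArg Subtype.val (e1.trans e2.symm) : (⟨u, hu⟩ : ↥J) • b₁ = b₁)
        exact hω (by rw [← hb₁', hJfix b₁ hfix])
      · -- fiber size divisible by p : product dies
        rw [hcard, hcardj, show j = 1 + (j - 1) from (Nat.add_sub_cancel' hjpos).symm,
          pow_add, pow_one, pow_mul, hFp, one_pow]
  rw [Fintype.prod_eq_single (Quotient.mk (orbitRel (↥J) (G ⧸ H)) ((1 : G) : G ⧸ H)) hsingle]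
  have hfib : Finset.filter
      (fun b : G ⧸ H => Quotient.mk (orbitRel (↥J) (G ⧸ H)) b =
        Quotient.mk (orbitRel (↥J) (G ⧸ H)) ((1 : G) : G ⧸ H)) Finset.univ
      = {((1 : G) : G ⧸ H)} := by
    ext c
    simp only [Finset.mem_filter, Finset.mem_univ, true_and, Finset.mem_singleton]
    constructor
    · intro hc
      have hrel : c ∈ orbit (↥J) ((1 : G) : G ⧸ H) := Quotient.exact hc
      obtain ⟨v, hv⟩ := hrel
      have : ((v : G) • ((1 : G) : G ⧸ H) : G ⧸ H) = ((1 : G) : G ⧸ H) := by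
        rw [MulAction.Quotient.smul_mk]
        refine (QuotientGroup.eq).mpr ?_
        simpa using inv_mem (hJH v.2)
      rw [← hv]
      exact this
    · intro hc
      rw [hc]
  rw [hfib, Finset.prod_singleton, hFb0]

variable {G : Type*} [Group G]

variable {G : Type*} [Group G]

theorem le_thompson_of_mem {P A : Subgroup G}
    (hA : A ∈ {A : Subgroup G | A ≤ P ∧ IsCommSub A ∧
      ∀ B : Subgroup G, B ≤ P → IsCommSub B → Nat.card B ≤ Nat.card A}) :
    A ≤ ThompsonSubgroup P :=
  le_iSup₂ (f := fun (A : Subgroup G)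
    (_ : A ∈ {A : Subgroup G | A ≤ P ∧ IsCommSub A ∧
      ∀ B : Subgroup G, B ≤ P → IsCommSub B → Nat.card B ≤ Nat.card A}) => A) A hA

theorem thompson_le (P : Subgroup G) : ThompsonSubgroup P ≤ P :=
  iSup₂_le fun _ hA => hA.1

theorem thompson_max [Finite G] (P : Subgroup G) :
    ∀ B : Subgroup G, B ≤ P → IsCommSub B → Nat.card B ≤ Nat.card (ThompsonSubgroup P) := by
  have hbot : IsCommSub (⊥ : Subgroup G) := by
    intro x hx y hy
    rw [Subgroup.mem_bot] at hx hy
    rw [hx, hy]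
  haveI : Nonempty {A : Subgroup G // A ≤ P ∧ IsCommSub A} := ⟨⟨⊥, bot_le, hbot⟩⟩
  obtain ⟨A₀, hA₀⟩ :=
    Finite.exists_max (fun A : {A : Subgroup G // A ≤ P ∧ IsCommSub A} => Nat.card A.1)
  intro B hBP hBc
  have hA₀mem : A₀.1 ∈ {A : Subgroup G | A ≤ P ∧ IsCommSub A ∧
      ∀ B : Subgroup G, B ≤ P → IsCommSub B → Nat.card B ≤ Nat.card A} :=
    ⟨A₀.2.1, A₀.2.2, fun B hB hBc => hA₀ ⟨B, hB, hBc⟩⟩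
  exact le_trans (hA₀ ⟨B, hBP, hBc⟩) (Subgroup.card_le_of_le (le_thompson_of_mem hA₀mem))

theorem conj_card (g : G) (J : Subgroup G) :
    Nat.card (Subgroup.map (MulAut.conj g).toMonoidHom J) = Nat.card J :=
  (Nat.card_congr (Subgroup.equivMapOfInjective J _ (MulAut.conj g).injective).toEquiv).symm

theorem conj_comm {g : G} {J : Subgroup G} (h : IsCommSub J) :
    IsCommSub (Subgroup.map (MulAut.conj g).toMonoidHom J) := by
  rintro x ⟨a, ha, rfl⟩ y ⟨b, hb, rfl⟩
  rw [← map_mul, ← map_mul, h a ha b hb]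

theorem thompson_absorb [Finite G] {P : Subgroup G}
    (hJab : IsCommSub (ThompsonSubgroup P)) {g : G}
    (h : Subgroup.map (MulAut.conj g).toMonoidHom (ThompsonSubgroup P) ≤ P) :
    Subgroup.map (MulAut.conj g).toMonoidHom (ThompsonSubgroup P) = ThompsonSubgroup P := by
  have hcard := conj_card g (ThompsonSubgroup P)
  have hmem : Subgroup.map (MulAut.conj g).toMonoidHom (ThompsonSubgroup P) ∈
      {A : Subgroup G | A ≤ P ∧ IsCommSub A ∧
        ∀ B : Subgroup G, B ≤ P → IsCommSub B → Nat.card B ≤ Nat.card A} :=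
    ⟨h, conj_comm hJab, fun B hB hBc => hcard ▸ thompson_max P B hB hBc⟩
  exact Subgroup.eq_of_le_of_card_ge (le_thompson_of_mem hmem) hcard.symm.le

theorem mem_normalizer_of_conj_eq {J : Subgroup G} {g : G}
    (h : Subgroup.map (MulAut.conj g).toMonoidHom J = J) : g ∈ Subgroup.normalizer (J : Set G) := by
  rw [Subgroup.mem_normalizer_iff]
  intro a
  constructor
  · intro ha
    rw [← h]
    exact ⟨a, ha, rfl⟩
  · intro ha
    rw [← h] at ha
    obtain ⟨b, hb, hbe⟩ := ha
    have : b = a := by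
      have := hbe
      simp only [MulEquiv.coe_toMonoidHom, MulAut.conj_apply] at this
      exact mul_left_cancel (mul_right_cancel this)
    exact this ▸ hb

theorem sylow_le_normalizer [Finite G] {p : ℕ} [Fact p.Prime] (P : Sylow p G)
    (hJab : IsCommSub (ThompsonSubgroup (P : Subgroup G))) :
    (P : Subgroup G) ≤ Subgroup.normalizer (ThompsonSubgroup (P : Subgroup G) : Set G) := by
  intro u hu
  refine mem_normalizer_of_conj_eq (thompson_absorb hJab ?_)
  rintro y ⟨a, ha, rfl⟩
  simp only [MulEquiv.coe_toMonoidHom, MulAut.conj_apply]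
  exact mul_mem (mul_mem hu (thompson_le _ ha)) (inv_mem hu)

theorem conj_conj (g h : G) (J : Subgroup G) :
    Subgroup.map (MulAut.conj g).toMonoidHom (Subgroup.map (MulAut.conj h).toMonoidHom J) =
      Subgroup.map (MulAut.conj (g * h)).toMonoidHom J := by
  rw [Subgroup.map_map]
  congr 1
  ext x
  simp only [MonoidHom.comp_apply, MulEquiv.coe_toMonoidHom, MulAut.conj_apply]
  group

theorem weak_closure [Finite G] {p : ℕ} [Fact p.Prime] (P : Sylow p G)
    (hJab : IsCommSub (ThompsonSubgroup (P : Subgroup G))) {g : G}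
    (h : Subgroup.map (MulAut.conj g).toMonoidHom (ThompsonSubgroup (P : Subgroup G)) ≤
      Subgroup.normalizer (ThompsonSubgroup (P : Subgroup G) : Set G)) :
    g ∈ Subgroup.normalizer (ThompsonSubgroup (P : Subgroup G) : Set G) := by
  set J := ThompsonSubgroup (P : Subgroup G) with hJ
  set N := Subgroup.normalizer (J : Set G) with hN
  have hPN : (P : Subgroup G) ≤ N := sylow_le_normalizer P hJab
  set PN : Sylow p ↥N := P.subtype hPN with hPNdef
  have hJg : IsPGroup p ↥(Subgroup.map (MulAut.conj g).toMonoidHom J) :=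
    (P.2.to_le (thompson_le _)).map _
  have hQ0 : IsPGroup p ↥((Subgroup.map (MulAut.conj g).toMonoidHom J).subgroupOf N) :=
    hJg.comap_subtype
  obtain ⟨R, hR⟩ := hQ0.exists_le_sylow
  obtain ⟨n, hn⟩ := MulAction.exists_smul_eq (↥N) PN R
  have key : ∀ y ∈ Subgroup.map (MulAut.conj g).toMonoidHom J,
      ((n : G))⁻¹ * y * (n : G) ∈ (P : Subgroup G) := by
    intro y hy
    have hyN : y ∈ N := h hy
    have h1 : (⟨y, hyN⟩ : ↥N) ∈ (Subgroup.map (MulAut.conj g).toMonoidHom J).subgroupOf N :=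
      (Subgroup.mem_subgroupOf).mpr hy
    have h2 : (⟨y, hyN⟩ : ↥N) ∈ (R : Subgroup ↥N) := hR h1
    rw [← hn] at h2
    rw [Sylow.smul_def, Sylow.pointwise_smul_def,
      Subgroup.mem_pointwise_smul_iff_inv_smul_mem] at h2
    rw [Sylow.coe_subtype, Subgroup.mem_subgroupOf] at h2
    have h3 : (((MulAut.conj n)⁻¹ • (⟨y, hyN⟩ : ↥N) : ↥N) : G) = (n : G)⁻¹ * y * (n : G) := by
      simp [MulAut.smul_def, MulAut.conj_apply]
    rwa [h3] at h2
  have hle : Subgroup.map (MulAut.conj ((n : G)⁻¹ * g)).toMonoidHom J ≤ (P : Subgroup G) := by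
    rw [← conj_conj]
    rintro z ⟨y, hy, rfl⟩
    have := key y hy
    simpa [MulAut.conj_apply] using this
  have habs := thompson_absorb hJab hle
  have h1 : (n : G)⁻¹ * g ∈ N := mem_normalizer_of_conj_eq habs
  have h2 : (n : G) ∈ N := n.2
  have : (n : G) * ((n : G)⁻¹ * g) ∈ N := mul_mem h2 h1
  simpa using this


end Stmt17Aux

open Stmt17Aux in
theorem stmt_17 {G : Type*} [Group G] [Finite G] {p : ℕ} [Fact p.Prime]
    (P : Sylow p G)
    (hJab : IsCommSub (ThompsonSubgroup (P : Subgroup G)))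
    (hJexp : ∀ x ∈ ThompsonSubgroup (P : Subgroup G), x ^ p = 1)
    (hnotN : ¬ ThompsonSubgroup (P : Subgroup G) ≤
      ⁅Subgroup.normalizer (ThompsonSubgroup (P : Subgroup G) : Set G),
        Subgroup.normalizer (ThompsonSubgroup (P : Subgroup G) : Set G)⁆) :
    ¬ ThompsonSubgroup (P : Subgroup G) ≤ commutator G := by
  intro hcon
  set J := ThompsonSubgroup (P : Subgroup G) with hJdef
  set N := Subgroup.normalizer (J : Set G) with hNdef
  set ϕ : ↥N →* Abelianization ↥N := Abelianization.of with hphi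
  apply hnotN
  intro x hx
  have hxN : x ∈ N := Subgroup.le_normalizer hx
  have hJp : IsPGroup p ↥J := P.2.to_le (thompson_le _)
  have hconj : ∀ (h w : G) (hh : h ∈ N) (hw : w ∈ N) (hw2 : h⁻¹ * w * h ∈ N),
      ϕ ⟨h⁻¹ * w * h, hw2⟩ = ϕ ⟨w, hw⟩ := by
    intro h w hh hw hw2
    have e : (⟨h⁻¹ * w * h, hw2⟩ : ↥N) = ⟨h, hh⟩⁻¹ * ⟨w, hw⟩ * ⟨h, hh⟩ := Subtype.ext rfl
    rw [e, map_mul, map_mul, map_inv,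
      mul_comm ((ϕ ⟨h, hh⟩)⁻¹) (ϕ ⟨w, hw⟩), mul_assoc, inv_mul_cancel, mul_one]
  have hwc : ∀ g : G, (∀ u ∈ J, g⁻¹ * u * g ∈ N) → g ∈ N := by
    intro g hg
    have hle : Subgroup.map (MulAut.conj g⁻¹).toMonoidHom J ≤ N := by
      rintro y ⟨u, hu, rfl⟩
      simpa [MulAut.conj_apply] using hg u hu
    have := weak_closure P hJab hle
    exact (inv_mem_iff).mp this
  have htr : ϕ.transfer x = ϕ ⟨x, hxN⟩ :=
    transfer_eq_of_unique_fixed ϕ Subgroup.le_normalizer hJab hJp hconj hwc x hx (hJexp x hx)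
  have hker : ϕ.transfer x = 1 := by
    have h1 : commutator G ≤ (ϕ.transfer).ker := Abelianization.commutator_subset_ker _
    exact h1 (hcon hx)
  have hone : ϕ ⟨x, hxN⟩ = 1 := by rw [← htr, hker]
  have hmem : (⟨x, hxN⟩ : ↥N) ∈ commutator ↥N := (QuotientGroup.eq_one_iff _).mp hone
  have h2 : x ∈ Subgroup.map N.subtype (commutator ↥N) := ⟨⟨x, hxN⟩, hmem, rfl⟩
  rw [commutator_def, Subgroup.map_commutator] at h2
  rwa [← MonoidHom.range_eq_map, Subgroup.range_subtype] at h2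
end

section
/- Let Q be an extraspecial group of order 3⁷ and exponent 3 with center Z, and suppose a group of order 2 acts on Q with r acting such that C_Q(r) is extraspecial of order 3⁵. Then [Q, r] is extraspecial of order 3³, Q = C_Q(r)·[Q,r], and [C_Q(r), [Q,r]] ≤ Z. -/
/-- The subgroup `Q` of `G` is extraspecial for the prime `p`, with center `Z`:
`Z(Q) = Q' = Φ(Q) = Z` has order `p`. -/
def IsExtraspecialSub {G : Type*} [Group G] (p : ℕ) (Q Z : Subgroup G) : Prop :=
  Z ≤ Q ∧ Nat.card Z = p ∧ Q ⊓ Subgroup.centralizer (Q : Set G) = Z ∧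
    ⁅Q, Q⁆ = Z ∧ frattiniOf Q = Z

/-- The fixed-point subgroup `C_Q(r)` of an automorphism `r` of `Q`. -/
def fixedSub {Q : Type*} [Group Q] (r : MulAut Q) : Subgroup Q where
  carrier := {q | r q = q}
  one_mem' := map_one r
  mul_mem' := fun {a b} ha hb => by
    simp only [Set.mem_setOf_eq] at *
    rw [map_mul, ha, hb]
  inv_mem' := fun {a} ha => by
    simp only [Set.mem_setOf_eq] at *
    rw [map_inv, ha]

/-- The commutator subgroup `[Q, r]` of `Q` with an automorphism `r`. -/
def commSub {Q : Type*} [Group Q] (r : MulAut Q) : Subgroup Q :=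
  Subgroup.closure (Set.range fun q : Q => q⁻¹ * r q)

private lemma aux_comm3 {A : Type*} [Group A] (hcomm : ∀ a b : A, a * b = b * a) (X Y : A)
    (hX : X ^ 3 = 1) (hY : Y ^ 3 = 1) :
    (X * (Y * X⁻¹) ^ 2)⁻¹ * (Y * (X * Y⁻¹) ^ 2) = 1 := by
  letI : CommGroup A := { ‹Group A› with mul_comm := hcomm }
  have h : (X * (Y * X⁻¹) ^ 2)⁻¹ * (Y * (X * Y⁻¹) ^ 2) = X ^ 3 * (Y ^ 3)⁻¹ := by
    simp [pow_succ, mul_pow, mul_inv_rev, mul_comm, mul_left_comm, mul_assoc]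
  rw [h, hX, hY]; simp

open Pointwise
open scoped commutatorElement

theorem stmt_18 {Q : Type*} [Group Q] [Finite Q]
    (hcard : Nat.card Q = 3 ^ 7)
    (hZ : Nat.card (Subgroup.center Q) = 3)
    (hcomm : commutator Q = Subgroup.center Q)
    (hfrat : frattiniOf (⊤ : Subgroup Q) = Subgroup.center Q)
    (hexp : ∀ q : Q, q ^ 3 = 1)
    (r : MulAut Q) (hr : orderOf r = 2)
    (hrZ : ∀ z ∈ Subgroup.center Q, r z = z)
    (hfixE : IsExtraspecialSub 3 (fixedSub r) (Subgroup.center Q))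
    (hfixC : Nat.card (fixedSub r) = 3 ^ 5) :
    IsExtraspecialSub 3 (commSub r) (Subgroup.center Q) ∧
    Nat.card (commSub r) = 3 ^ 3 ∧
    fixedSub r ⊔ commSub r = ⊤ ∧
    ⁅fixedSub r, commSub r⁆ ≤ Subgroup.center Q := by
  classical
  -- r has order 2
  have hr2 : ∀ q : Q, r (r q) = q := by
    intro q
    have h1 : r ^ 2 = 1 := by rw [← hr]; exact pow_orderOf_eq_one r
    have h2 : (r * r) q = q := by rw [← sq, h1]; rfl
    simpa using h2
  -- commutators are central
  have hcent : ∀ a b : Q, ⁅a, b⁆ ∈ Subgroup.center Q := by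
    intro a b
    rw [← hcomm, commutator_def]
    exact Subgroup.commutator_mem_commutator (Subgroup.mem_top a) (Subgroup.mem_top b)
  have hmove : ∀ z ∈ Subgroup.center Q, ∀ g : Q, g * z = z * g :=
    fun z hz g => Subgroup.mem_center_iff.mp hz g
  have hmc : ∀ a b g : Q, g * ⁅a, b⁆ = ⁅a, b⁆ * g := fun a b g => hmove _ (hcent a b) g
  -- square-one elements are trivial
  have hsq1 : ∀ x : Q, x ^ 2 = 1 → x = 1 := by
    intro x h2
    have h3 := hexp x
    calc x = x ^ 3 * (x ^ 2)⁻¹ := by group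
    _ = 1 := by rw [h2, h3]; simp
  -- commutator calculus in a class-2 group
  have hCmulL : ∀ a c b : Q, ⁅a * c, b⁆ = ⁅c, b⁆ * ⁅a, b⁆ := by
    intro a c b
    have h1 : ⁅a * c, b⁆ = a * ⁅c, b⁆ * (b * a⁻¹ * b⁻¹) := by
      simp only [commutatorElement_def]; group
    rw [h1, hmc c b a]
    simp only [commutatorElement_def]; group
  have hCinvL : ∀ a b : Q, ⁅a⁻¹, b⁆ = ⁅a, b⁆⁻¹ := by
    intro a b
    have h1 : (1 : Q) = ⁅a⁻¹, b⁆ * ⁅a, b⁆ := by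
      rw [← hCmulL]; simp
    exact eq_inv_of_mul_eq_one_left h1.symm
  have hCmulR : ∀ a b c : Q, ⁅a, b * c⁆ = ⁅a, b⁆ * ⁅a, c⁆ := by
    intro a b c
    have h2 := congrArg (·⁻¹) (hCmulL b c a)
    simpa [commutatorElement_inv, mul_inv_rev] using h2
  have hCinvR : ∀ a b : Q, ⁅a, b⁻¹⁆ = ⁅a, b⁆⁻¹ := by
    intro a b
    have h2 := congrArg (·⁻¹) (hCinvL b a)
    simpa [commutatorElement_inv] using h2
  have hCpowL : ∀ (a b : Q) (n : ℕ), ⁅a ^ n, b⁆ = ⁅a, b⁆ ^ n := by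
    intro a b n
    induction n with
    | zero => simp
    | succ n ih => rw [pow_succ, hCmulL, ih, pow_succ']
  have hCzpowL : ∀ (a b : Q) (n : ℤ), ⁅a ^ n, b⁆ = ⁅a, b⁆ ^ n := by
    intro a b n
    cases n with
    | ofNat m => simpa using hCpowL a b m
    | negSucc m => rw [zpow_negSucc, zpow_negSucc, hCinvL, hCpowL]
  -- the subgroup N of elements inverted mod Z
  let N : Subgroup Q :=
    { carrier := {q : Q | r q * q ∈ Subgroup.center Q}
      one_mem' := by
        simp only [Set.mem_setOf_eq, map_one, mul_one]
        exact one_mem _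
      mul_mem' := by
        intro a b ha hb
        simp only [Set.mem_setOf_eq] at *
        have hb' : a * (r b * b) = (r b * b) * a := hmove _ hb a
        have key : r (a * b) * (a * b) = (r a * a) * ((r b * b) * ⁅a⁻¹, b⁻¹⁆) := by
          have h1 : (r a * a) * ((r b * b) * ⁅a⁻¹, b⁻¹⁆)
              = r a * (a * (r b * b)) * (a⁻¹ * b⁻¹ * a * b) := by
            rw [commutatorElement_def]; group
          rw [h1, hb', map_mul]; group
        rw [key]
        exact mul_mem ha (mul_mem hb (hcent a⁻¹ b⁻¹))
      inv_mem' := by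
        intro a ha
        simp only [Set.mem_setOf_eq] at *
        have key : r a⁻¹ * a⁻¹ = (a * (r a * a) * a⁻¹)⁻¹ := by rw [map_inv]; group
        rw [key]
        have hn : (Subgroup.center Q).Normal := inferInstance
        exact inv_mem (hn.conj_mem _ ha a) }
  have hRN : ∀ m ∈ commSub r, r m * m ∈ Subgroup.center Q := by
    have hle : commSub r ≤ N := by
      rw [commSub, Subgroup.closure_le]
      rintro x ⟨q, rfl⟩
      show r (q⁻¹ * r q) * (q⁻¹ * r q) ∈ Subgroup.center Q
      have e : r (q⁻¹ * r q) * (q⁻¹ * r q) = 1 := by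
        rw [map_mul, map_inv, hr2]; group
      rw [e]; exact one_mem _
    exact fun m hm => hle hm
  -- elements of C commute with elements of R
  have hCN : ∀ c ∈ fixedSub r, ∀ m ∈ commSub r, c * m = m * c := by
    intro c hc m hm
    have hc' : r c = c := hc
    have hz := hRN m hm
    have h1 : r ⁅c, m⁆ = ⁅c, m⁆ := hrZ _ (hcent c m)
    have h2 : r ⁅c, m⁆ = ⁅c, r m⁆ := by rw [map_commutatorElement, hc']
    have hrm : r m = (r m * m) * m⁻¹ := by group
    have h3 : ⁅c, r m⁆ = ⁅c, m⁆⁻¹ := by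
      rw [hrm, hCmulR, hCinvR]
      have e : ⁅c, r m * m⁆ = 1 :=
        commutatorElement_eq_one_iff_mul_comm.mpr (hmove _ hz c)
      rw [e, one_mul]
    have h6 : ⁅c, m⁆ = ⁅c, m⁆⁻¹ := h1.symm.trans (h2.trans h3)
    have h5 : ⁅c, m⁆ ^ 2 = 1 := by
      calc ⁅c, m⁆ ^ 2 = ⁅c, m⁆⁻¹ * ⁅c, m⁆ := by
            rw [pow_two]; exact congrArg (· * ⁅c, m⁆) h6
      _ = 1 := inv_mul_cancel _
    exact commutatorElement_eq_one_iff_mul_comm.mp (hsq1 _ h5)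
  -- decomposition Q = C * R
  have hdec : ∀ q : Q, ∃ c ∈ fixedSub r, ∃ m ∈ commSub r, q = c * m := by
    intro q
    refine ⟨q * (r q * q⁻¹) ^ 2, ?_, (q * (r q)⁻¹) ^ 2, ?_, by simp only [pow_two]; group⟩
    · show r (q * (r q * q⁻¹) ^ 2) = q * (r q * q⁻¹) ^ 2
      set c : Q := q * (r q * q⁻¹) ^ 2 with hcdef
      have hwZ : c⁻¹ * r c ∈ Subgroup.center Q := by
        rw [← QuotientGroup.ker_mk' (Subgroup.center Q), MonoidHom.mem_ker]
        set π := QuotientGroup.mk' (Subgroup.center Q) with hπ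
        have hπc : ∀ x y : Q ⧸ Subgroup.center Q, x * y = y * x := by
          intro x y
          refine QuotientGroup.induction_on x fun a => QuotientGroup.induction_on y fun b => ?_
          have e : ((a * b : Q) : Q ⧸ Subgroup.center Q) = ((b * a : Q) : Q ⧸ Subgroup.center Q) := by
            rw [QuotientGroup.eq]
            have e2 : (a * b)⁻¹ * (b * a) = ⁅b⁻¹, a⁻¹⁆ := by
              rw [commutatorElement_def]; group
            rw [e2]; exact hcent _ _
          simpa using e
        have h3 : ∀ x : Q, (π x) ^ 3 = 1 := by
          intro x; rw [← map_pow, hexp, map_one]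
        have key := aux_comm3 hπc (π q) (π (r q)) (h3 q) (h3 (r q))
        have e : π (c⁻¹ * r c)
            = (π q * (π (r q) * (π q)⁻¹) ^ 2)⁻¹ * (π (r q) * (π q * (π (r q))⁻¹) ^ 2) := by
          rw [hcdef]
          simp only [map_mul, map_inv, map_pow, hr2]
        rw [e]; exact key
      have hrw : r (c⁻¹ * r c) = c⁻¹ * r c := hrZ _ hwZ
      have e1 : r c = c * (c⁻¹ * r c) := by group
      have h2' : c = c * ((c⁻¹ * r c) * (c⁻¹ * r c)) := by
        calc c = r (r c) := (hr2 c).symm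
        _ = r (c * (c⁻¹ * r c)) := by rw [← e1]
        _ = r c * (c⁻¹ * r c) := by rw [map_mul, hrw]
        _ = c * ((c⁻¹ * r c) * (c⁻¹ * r c)) := by rw [e1]; group
      have hw2 : (c⁻¹ * r c) ^ 2 = 1 := by
        have e3 : c * ((c⁻¹ * r c) * (c⁻¹ * r c)) = c * 1 := by rw [← h2', mul_one]
        rw [pow_two]; exact mul_left_cancel e3
      have hw1 := hsq1 _ hw2
      rw [e1, hw1, mul_one]
    · have hgen : q * (r q)⁻¹ ∈ Set.range fun p : Q => p⁻¹ * r p :=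
        ⟨q⁻¹, by simp only [map_inv, inv_inv]⟩
      exact pow_mem (Subgroup.subset_closure hgen) 2
  -- C ⊔ R = ⊤
  have hsup : fixedSub r ⊔ commSub r = ⊤ := by
    rw [eq_top_iff]
    intro q _
    obtain ⟨c, hc, m, hm, rfl⟩ := hdec q
    exact mul_mem (Subgroup.mem_sup_left hc) (Subgroup.mem_sup_right hm)
  -- C ⊓ R ≤ Z
  have hinterle : fixedSub r ⊓ commSub r ≤ Subgroup.center Q := by
    intro x hx
    obtain ⟨hxC, hxR⟩ := Subgroup.mem_inf.mp hx
    have hx1 : r x = x := hxC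
    have hx2 : r x * x ∈ Subgroup.center Q := hRN x hxR
    rw [hx1, ← pow_two] at hx2
    have e : x = (x ^ 2) ^ 2 * (x ^ 3)⁻¹ := by group
    rw [e, hexp, inv_one, mul_one]
    exact pow_mem hx2 2
  -- R is nonabelian
  have hnab : ∃ x ∈ commSub r, ∃ y ∈ commSub r, ⁅x, y⁆ ≠ 1 := by
    by_contra h
    push_neg at h
    have hRcen : ∀ m ∈ commSub r, m ∈ Subgroup.center Q := by
      intro m hm
      rw [Subgroup.mem_center_iff]
      intro q
      obtain ⟨c, hc, m', hm', rfl⟩ := hdec q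
      have h1 : c * m = m * c := hCN c hc m hm
      have h2 : m' * m = m * m' := commutatorElement_eq_one_iff_mul_comm.mp (h m' hm' m hm)
      calc c * m' * m = c * (m * m') := by rw [mul_assoc, h2]
      _ = m * (c * m') := by rw [← mul_assoc, h1, mul_assoc]
    have hRle : commSub r ≤ fixedSub r := fun m hm => hfixE.1 (hRcen m hm)
    have htop : fixedSub r = ⊤ := by
      have h' := hsup
      rw [sup_eq_left.mpr hRle] at h'
      exact h'
    have hcard' : (3 : ℕ) ^ 5 = 3 ^ 7 := by
      rw [← hfixC, htop, Subgroup.card_top, hcard]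
    norm_num at hcard'
  obtain ⟨x, hxR, y, hyR, hxy⟩ := hnab
  -- Z is generated by ⁅x,y⁆
  have hzp : Subgroup.zpowers ⁅x, y⁆ = Subgroup.center Q := by
    have hle : Subgroup.zpowers ⁅x, y⁆ ≤ Subgroup.center Q :=
      Subgroup.zpowers_le.mpr (hcent x y)
    have hdvd : Nat.card (Subgroup.zpowers ⁅x, y⁆) ∣ 3 := hZ ▸ Subgroup.card_dvd_of_le hle
    have hne : Nat.card (Subgroup.zpowers ⁅x, y⁆) ≠ 1 := by
      intro h1
      have hb : Subgroup.zpowers ⁅x, y⁆ = ⊥ := by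
        have := Subgroup.eq_of_le_of_card_ge (bot_le (a := Subgroup.zpowers ⁅x, y⁆))
          (by rw [h1, Subgroup.card_bot])
        exact this.symm
      have : ⁅x, y⁆ ∈ (⊥ : Subgroup Q) := hb ▸ Subgroup.mem_zpowers _
      exact hxy (Subgroup.mem_bot.mp this)
    have h3 : Nat.card (Subgroup.zpowers ⁅x, y⁆) = 3 := by
      rcases (Nat.Prime.eq_one_or_self_of_dvd Nat.prime_three _ hdvd) with h | h
      · exact absurd h hne
      · exact h
    exact Subgroup.eq_of_le_of_card_ge hle (by rw [hZ, h3])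
  have hxyR : ⁅x, y⁆ ∈ commSub r := by
    rw [commutatorElement_def]
    exact mul_mem (mul_mem (mul_mem hxR hyR) (inv_mem hxR)) (inv_mem hyR)
  have hZR : Subgroup.center Q ≤ commSub r := by
    rw [← hzp]
    exact Subgroup.zpowers_le.mpr hxyR
  have hinter : fixedSub r ⊓ commSub r = Subgroup.center Q :=
    le_antisymm hinterle (le_inf hfixE.1 hZR)
  have hcomRR : ⁅commSub r, commSub r⁆ = Subgroup.center Q := by
    apply le_antisymm
    · calc ⁅commSub r, commSub r⁆ ≤ ⁅(⊤ : Subgroup Q), ⊤⁆ :=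
            Subgroup.commutator_mono le_top le_top
      _ = Subgroup.center Q := by rw [← commutator_def, hcomm]
    · rw [← hzp]
      exact Subgroup.zpowers_le.mpr (Subgroup.commutator_mem_commutator hxR hyR)
  -- cardinality of R
  have hcardR : Nat.card (commSub r) = 3 ^ 3 := by
    have hQcard := Subgroup.card_eq_card_quotient_mul_card_subgroup (fixedSub r)
    rw [hcard, hfixC] at hQcard
    have hqc : Nat.card (Q ⧸ fixedSub r) = 9 := by
      norm_num at hQcard; omega
    have hcardZ' : Nat.card ((Subgroup.center Q).subgroupOf (commSub r)) = 3 := by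
      rw [← hZ]
      exact Nat.card_congr (Subgroup.subgroupOfEquivOfLe hZR).toEquiv
    have hRQ := Subgroup.card_eq_card_quotient_mul_card_subgroup
      ((Subgroup.center Q).subgroupOf (commSub r))
    have hbij : Nat.card ((commSub r) ⧸ (Subgroup.center Q).subgroupOf (commSub r))
        = Nat.card (Q ⧸ fixedSub r) := by
      refine Nat.card_eq_of_bijective
        (fun u => Quotient.liftOn' u (fun m => ((m : Q) : Q ⧸ fixedSub r)) ?_) ⟨?_, ?_⟩
      · intro a b hab
        have hab' := QuotientGroup.leftRel_apply.mp hab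
        have h' : ((a : Q))⁻¹ * b ∈ fixedSub r := hfixE.1 (Subgroup.mem_subgroupOf.mp hab')
        exact QuotientGroup.eq.mpr h'
      · intro u v
        refine Quotient.inductionOn₂' u v fun a b h => ?_
        have h1 : (a : Q)⁻¹ * b ∈ fixedSub r := QuotientGroup.eq.mp h
        have h2 : (a : Q)⁻¹ * b ∈ commSub r := mul_mem (inv_mem a.2) b.2
        have h3 : (a : Q)⁻¹ * b ∈ Subgroup.center Q :=
          hinter ▸ (Subgroup.mem_inf.mpr ⟨h1, h2⟩)
        apply Quotient.sound'
        rw [QuotientGroup.leftRel_apply]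
        exact Subgroup.mem_subgroupOf.mpr h3
      · intro yq
        refine QuotientGroup.induction_on yq fun q => ?_
        obtain ⟨c, hc, m, hm, rfl⟩ := hdec q
        refine ⟨Quotient.mk'' ⟨m, hm⟩, ?_⟩
        show ((m : Q) : Q ⧸ fixedSub r) = ((c * m : Q) : Q ⧸ fixedSub r)
        rw [QuotientGroup.eq]
        have h1 : c * m = m * c := hCN c hc m hm
        rw [h1, ← mul_assoc, inv_mul_cancel, one_mul]
        exact hc
    rw [hbij, hqc, hcardZ'] at hRQ
    rw [hRQ]; norm_num
  -- centralizer condition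
  have hcentR : commSub r ⊓ Subgroup.centralizer (commSub r : Set Q) = Subgroup.center Q := by
    apply le_antisymm
    · intro w hw
      obtain ⟨hw1, hw2⟩ := Subgroup.mem_inf.mp hw
      rw [Subgroup.mem_centralizer_iff] at hw2
      rw [Subgroup.mem_center_iff]
      intro q
      obtain ⟨c, hc, m, hm, rfl⟩ := hdec q
      have h1 : c * w = w * c := hCN c hc w hw1
      have h2 : m * w = w * m := hw2 m hm
      calc c * m * w = c * (w * m) := by rw [mul_assoc, h2]
      _ = w * (c * m) := by rw [← mul_assoc, h1, mul_assoc]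
    · exact le_inf hZR (Subgroup.center_le_centralizer _)
  -- Frattini subgroup of R
  have hord3 : orderOf ⁅x, y⁆ = 3 := by
    have hdvd : orderOf ⁅x, y⁆ ∣ 3 := orderOf_dvd_of_pow_eq_one (hexp _)
    rcases (Nat.Prime.eq_one_or_self_of_dvd Nat.prime_three _ hdvd) with h | h
    · exact absurd (orderOf_eq_one_iff.mp h) hxy
    · exact h
  have key : ∀ a b : Q, a ∈ commSub r → b ∈ commSub r → ⁅a, b⁆ ≠ 1 →
      (Subgroup.zpowers a ⊔ Subgroup.center Q) ∈
        {M : Subgroup Q | M < commSub r ∧ ∀ K, M < K → K ≤ commSub r → K = commSub r} := by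
    intro a b haR hbR hab
    set M : Subgroup Q := Subgroup.zpowers a ⊔ Subgroup.center Q with hM
    have hMle : M ≤ commSub r := sup_le (Subgroup.zpowers_le.mpr haR) hZR
    have hbM : b ∉ M := by
      intro hbm
      have hset : b ∈ ((Subgroup.zpowers a : Set Q) * (Subgroup.center Q : Set Q)) := by
        rw [← Subgroup.mul_normal]; exact hbm
      obtain ⟨a', ha', z, hz, heq⟩ := hset
      obtain ⟨n, rfl⟩ := Subgroup.mem_zpowers_iff.mp ha'
      have heq' : a ^ n * z = b := heq
      apply hab
      have h1 : ⁅a, a ^ n⁆ = 1 :=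
        commutatorElement_eq_one_iff_mul_comm.mpr ((Commute.refl a).zpow_right n).eq
      have h2 : ⁅a, z⁆ = 1 := commutatorElement_eq_one_iff_mul_comm.mpr (hmove _ hz a)
      rw [← heq', hCmulR, h1, h2, mul_one]
    have hMlt : M < commSub r :=
      lt_of_le_of_ne hMle (fun he => hbM (by rw [he]; exact hbR))
    have haZ : a ∉ Subgroup.center Q :=
      fun haz => hab (commutatorElement_eq_one_iff_mul_comm.mpr (hmove _ haz b).symm)
    have hdvd27 : Nat.card M ∣ 3 ^ 3 := hcardR ▸ Subgroup.card_dvd_of_le hMle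
    obtain ⟨k, hk3, hMcard⟩ := (Nat.dvd_prime_pow Nat.prime_three).mp hdvd27
    have hZleM : Subgroup.center Q ≤ M := le_sup_right
    have h3dvd : (3 : ℕ) ∣ Nat.card M := hZ ▸ Subgroup.card_dvd_of_le hZleM
    have hk1 : 1 ≤ k := by
      rcases Nat.eq_zero_or_pos k with hk0 | hk0
    -- k = 0 gives 3 ∣ 1
      · rw [hMcard, hk0] at h3dvd; norm_num at h3dvd
      · exact hk0
    have hkne3 : k ≠ 3 := by
      intro hkk
      have hMeq : M = commSub r :=
        Subgroup.eq_of_le_of_card_ge hMle (by rw [hcardR, hMcard, hkk])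
      exact hbM (by rw [hMeq]; exact hbR)
    have hkne1 : k ≠ 1 := by
      intro hkk
      have hMeq : Subgroup.center Q = M :=
        Subgroup.eq_of_le_of_card_ge hZleM (by rw [hZ, hMcard, hkk]; norm_num)
      exact haZ (by rw [hMeq]; exact Subgroup.mem_sup_left (Subgroup.mem_zpowers a))
    have hk2 : k = 2 := by omega
    refine ⟨hMlt, fun K hMK hKle => ?_⟩
    have hdvdK : Nat.card K ∣ 3 ^ 3 := hcardR ▸ Subgroup.card_dvd_of_le hKle
    obtain ⟨j, hj3, hKcard⟩ := (Nat.dvd_prime_pow Nat.prime_three).mp hdvdK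
    have hMdvdK : Nat.card M ∣ Nat.card K := Subgroup.card_dvd_of_le hMK.le
    rw [hMcard, hKcard, hk2] at hMdvdK
    have h2j : 2 ≤ j := (Nat.pow_dvd_pow_iff_le_right (by norm_num : (1:ℕ) < 3)).mp hMdvdK
    by_cases hj : j = 2
    · exfalso
      have hMeq : M = K :=
        Subgroup.eq_of_le_of_card_ge hMK.le (by rw [hMcard, hKcard, hk2, hj])
      exact hMK.ne hMeq
    · have hj3' : j = 3 := by omega
      exact Subgroup.eq_of_le_of_card_ge hKle (by rw [hcardR, hKcard, hj3'])
  have hfratR : frattiniOf (commSub r) = Subgroup.center Q := by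
    apply le_antisymm
    · have hM1 := key x y hxR hyR hxy
      have hM2 := key y x hyR hxR
        (fun h => hxy (by rw [← inv_one, ← h, commutatorElement_inv]))
      have hle1 : frattiniOf (commSub r) ≤ Subgroup.zpowers x ⊔ Subgroup.center Q :=
        biInf_le _ hM1
      have hle2 : frattiniOf (commSub r) ≤ Subgroup.zpowers y ⊔ Subgroup.center Q :=
        biInf_le _ hM2
      intro g hg
      have hg1 := hle1 hg
      have hg2 := hle2 hg
      have hg1' : g ∈ ((Subgroup.zpowers x : Set Q) * (Subgroup.center Q : Set Q)) := by
        rw [← Subgroup.mul_normal]; exact hg1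
      obtain ⟨x', hx', z1, hz1, rfl⟩ := hg1'
      obtain ⟨n, rfl⟩ := Subgroup.mem_zpowers_iff.mp hx'
      have hcomm1 : ⁅x ^ n * z1, y⁆ = ⁅x, y⁆ ^ n := by
        rw [hCmulL, hCzpowL]
        have e : ⁅z1, y⁆ = 1 :=
          commutatorElement_eq_one_iff_mul_comm.mpr (hmove _ hz1 y).symm
        rw [e, one_mul]
      have hcomm2 : ⁅x ^ n * z1, y⁆ = 1 := by
        have hg2' : x ^ n * z1 ∈ ((Subgroup.zpowers y : Set Q) * (Subgroup.center Q : Set Q)) := by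
          rw [← Subgroup.mul_normal]; exact hg2
        obtain ⟨y', hy', z2, hz2, heq⟩ := hg2'
        obtain ⟨mz, rfl⟩ := Subgroup.mem_zpowers_iff.mp hy'
        have heq' : y ^ mz * z2 = x ^ n * z1 := heq
        rw [← heq', hCmulL, hCzpowL]
        have e1 : ⁅z2, y⁆ = 1 :=
          commutatorElement_eq_one_iff_mul_comm.mpr (hmove _ hz2 y).symm
        have e2 : ⁅y, y⁆ = 1 := commutatorElement_eq_one_iff_mul_comm.mpr rfl
        rw [e1, e2, one_mul, one_zpow]
      have hpow : ⁅x, y⁆ ^ n = 1 := by rw [← hcomm1, hcomm2]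
      have h3n : (3 : ℤ) ∣ n := by
        have hh := orderOf_dvd_iff_zpow_eq_one.mpr hpow
        rw [hord3] at hh
        exact_mod_cast hh
      obtain ⟨t, rfl⟩ := h3n
      have hx3 : x ^ (3 * t : ℤ) = 1 := by
        rw [zpow_mul]
        have e : x ^ (3 : ℤ) = 1 := by
          rw [show (3 : ℤ) = ((3 : ℕ) : ℤ) from rfl, zpow_natCast, hexp]
        rw [e, one_zpow]
      simpa only [hx3, one_mul, SetLike.mem_coe] using hz1
    · refine le_iInf₂ fun M hM => ?_
      obtain ⟨hMlt, hMmax⟩ := hM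
      by_contra hnle
      obtain ⟨z, hzZ, hzM⟩ := SetLike.not_le_iff_exists.mp hnle
      have hlt : M < M ⊔ Subgroup.center Q :=
        lt_of_le_of_ne le_sup_left
          (fun he => hzM (by rw [he]; exact Subgroup.mem_sup_right hzZ))
      have hle2 : M ⊔ Subgroup.center Q ≤ commSub r := sup_le hMlt.le hZR
      have hMZR : M ⊔ Subgroup.center Q = commSub r := hMmax _ hlt hle2
      have hZM : Subgroup.center Q ≤ M := by
        rw [← hcomRR, ← hMZR, Subgroup.commutator_le]
        intro g1 h1 g2 h2
        have h1' : g1 ∈ ((M : Set Q) * (Subgroup.center Q : Set Q)) := by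
          rw [← Subgroup.mul_normal]; exact h1
        have h2' : g2 ∈ ((M : Set Q) * (Subgroup.center Q : Set Q)) := by
          rw [← Subgroup.mul_normal]; exact h2
        obtain ⟨m1, hm1, z1, hz1, heq1⟩ := h1'
        obtain ⟨m2, hm2, z2, hz2, heq2⟩ := h2'
        have heq1' : m1 * z1 = g1 := heq1
        have heq2' : m2 * z2 = g2 := heq2
        have hz1' : ⁅z1, m2 * z2⁆ = 1 :=
          commutatorElement_eq_one_iff_mul_comm.mpr (hmove _ hz1 _).symm
        have hz2' : ⁅m1, z2⁆ = 1 :=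
          commutatorElement_eq_one_iff_mul_comm.mpr (hmove _ hz2 m1)
        have e : ⁅m1 * z1, m2 * z2⁆ = ⁅m1, m2⁆ := by
          rw [hCmulL, hz1', one_mul, hCmulR, hz2', mul_one]
        rw [← heq1', ← heq2', e, commutatorElement_def]
        exact mul_mem (mul_mem (mul_mem hm1 hm2) (inv_mem hm1)) (inv_mem hm2)
      exact hnle hZM
  refine ⟨?_, hcardR, hsup, ?_⟩
  · exact ⟨hZR, hZ, hcentR, hcomRR, hfratR⟩
  · calc ⁅fixedSub r, commSub r⁆ ≤ ⁅(⊤ : Subgroup Q), ⊤⁆ :=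
        Subgroup.commutator_mono le_top le_top
    _ = Subgroup.center Q := by rw [← commutator_def, hcomm]
end
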